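/- arXiv:1407.2512 — 6 statements merged into one kernel-verified Lean document; each statement's English description precedes it below -/
import Mathlib

section
/- (Generalized Feynman–Schwinger parametrization) Let n be a positive integer, x_1,…,x_n ∈ (0,∞), and let g : (0,∞) → (0,∞) be a measurable function with ∫_0^∞ g(r)/r dr = 1. Then 1/(x_1 ⋯ x_n) = ∫_0^∞ dt · t^{n−1} ∫_{(0,∞)^n} du · g(|u|₁) e^{−t (u·x)}. -/
open MeasureTheory Set Real


lemma aux_lintegral_image {s : Set ℝ} {f f' : ℝ → ℝ} (hs : MeasurableSet s)
    (hf' : ∀ x ∈ s, HasDerivWithinAt f (f' x) s x) (hf : Set.InjOn f s) (g : ℝ → ENNReal) :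
    ∫⁻ x in f '' s, g x = ∫⁻ x in s, ENNReal.ofReal |f' x| * g (f x) := by
  simpa only [ContinuousLinearMap.det_toSpanSingleton] using
    lintegral_image_eq_lintegral_abs_det_fderiv_mul volume hs
      (fun x hx => (hf' x hx).hasFDerivWithinAt) hf g

lemma aux_gnorm (g : ℝ → ℝ) (hgmeas : Measurable g) (hg : ∀ r : ℝ, 0 < r → 0 ≤ g r)
    (hgnorm : ∫ r in Set.Ioi (0 : ℝ), g r / r = 1) :
    ∫⁻ r in Ioi (0:ℝ), ENNReal.ofReal (g r / r) = 1 := by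
  have hm : AEStronglyMeasurable (fun r : ℝ => g r / r) (volume.restrict (Ioi 0)) :=
    (hgmeas.div measurable_id).aestronglyMeasurable
  have hnn : 0 ≤ᵐ[volume.restrict (Ioi (0:ℝ))] fun r => g r / r := by
    rw [Filter.EventuallyLE, ae_restrict_iff' measurableSet_Ioi]
    filter_upwards with r hr
    simpa using div_nonneg (hg r hr) (le_of_lt hr)
  have h := integral_eq_lintegral_of_nonneg_ae hnn hm
  rw [hgnorm] at h
  have hne : (∫⁻ r in Ioi (0:ℝ), ENNReal.ofReal (g r / r)) ≠ ⊤ := by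
    intro hc
    rw [hc] at h
    simp at h
  rw [← ENNReal.ofReal_toReal hne, ← h]
  simp

lemma aux_subst (g : ℝ → ℝ) (hg : ∀ r : ℝ, 0 < r → 0 ≤ g r) {a : ℝ} (ha : 0 < a) :
    ∫⁻ t in Ioi (0:ℝ), ENNReal.ofReal (g (a / t) / t)
      = ∫⁻ r in Ioi (0:ℝ), ENNReal.ofReal (g r / r) := by
  have himg : (fun t : ℝ => a / t) '' Ioi 0 = Ioi 0 := by
    ext y
    constructor
    · rintro ⟨t, ht, rfl⟩
      exact div_pos ha ht
    · intro hy
      exact ⟨a / y, div_pos ha hy, by field_simp⟩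
  have hderiv : ∀ t ∈ Ioi (0:ℝ),
      HasDerivWithinAt (fun t : ℝ => a / t) (-(a / t ^ 2)) (Ioi 0) t := by
    intro t ht
    have h1 : HasDerivAt (fun t : ℝ => a / t) (-(a / t ^ 2)) t := by
      simpa [div_eq_mul_inv, mul_comm, neg_div] using
        ((hasDerivAt_inv (ne_of_gt ht)).const_mul a)
    exact h1.hasDerivWithinAt
  have hinj : Set.InjOn (fun t : ℝ => a / t) (Ioi 0) := by
    intro t₁ h₁ t₂ h₂ h
    field_simp at h
    exact inv_injective (by simpa only [one_div] using h)
  have := aux_lintegral_image (f := fun t : ℝ => a / t) (f' := fun t => -(a / t ^ 2))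
    measurableSet_Ioi hderiv hinj (fun r => ENNReal.ofReal (g r / r))
  rw [himg] at this
  rw [this]
  apply setLIntegral_congr_fun measurableSet_Ioi
  intro t ht
  beta_reduce
  have ht0 : (0:ℝ) < t := ht
  have ht2 : (0:ℝ) < t ^ 2 := pow_pos ht0 2
  have hat : 0 < a / t := div_pos ha ht
  rw [abs_neg, abs_of_pos (div_pos ha ht2), ← ENNReal.ofReal_mul (div_pos ha ht2).le]
  congr 1
  field_simp [ht0.ne']

lemma aux_scaling {n : ℕ} (f : (Fin n → ℝ) → ENNReal) (hf : Measurable f) {t : ℝ} (ht : 0 < t) :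
    ∫⁻ s in Set.univ.pi fun _ : Fin n => Set.Ioi (0:ℝ), f (t⁻¹ • s)
      = ENNReal.ofReal (t ^ n) * ∫⁻ u in Set.univ.pi fun _ : Fin n => Set.Ioi (0:ℝ), f u := by
  set S : Set (Fin n → ℝ) := Set.univ.pi fun _ : Fin n => Set.Ioi (0:ℝ) with hS
  have hSmeas : MeasurableSet S := MeasurableSet.univ_pi fun _ => measurableSet_Ioi
  have hφ : Measurable fun s : Fin n → ℝ => t⁻¹ • s := measurable_const_smul _
  have hmap : Measure.map (fun s : Fin n → ℝ => t⁻¹ • s) volume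
      = ENNReal.ofReal (t ^ n) • (volume : Measure (Fin n → ℝ)) := by
    rw [Measure.map_addHaar_smul (μ := (volume : Measure (Fin n → ℝ))) (inv_ne_zero ht.ne')]
    congr 1
    rw [Module.finrank_fin_fun]
    rw [← inv_pow, inv_inv, abs_of_pos (pow_pos ht n)]
  have hpre : (fun s : Fin n → ℝ => t⁻¹ • s) ⁻¹' S = S := by
    ext s
    simp only [hS, Set.mem_preimage, Set.mem_pi, Set.mem_univ, forall_true_left, true_implies,
      Set.mem_Ioi, Pi.smul_apply, smul_eq_mul]
    constructor
    · intro h j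
      nlinarith [h j, inv_pos.mpr ht]
    · intro h j
      exact mul_pos (inv_pos.mpr ht) (h j)
  calc ∫⁻ s in S, f (t⁻¹ • s)
      = ∫⁻ u, f u ∂(Measure.map (fun s : Fin n → ℝ => t⁻¹ • s) (volume.restrict S)) := by
        rw [lintegral_map hf hφ]
    _ = ∫⁻ u, f u ∂((Measure.map (fun s : Fin n → ℝ => t⁻¹ • s) volume).restrict S) := by
        rw [Measure.restrict_map hφ hSmeas, hpre]
    _ = ENNReal.ofReal (t ^ n) * ∫⁻ u in S, f u := by
        rw [hmap, Measure.restrict_smul, lintegral_smul_measure, smul_eq_mul]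

lemma aux_exp_real (x : ℝ) (hx : 0 < x) :
    ∫ r in Ioi (0:ℝ), Real.exp (-(x * r)) = x⁻¹ := by
  have := integral_comp_mul_left_Ioi (fun u : ℝ => Real.exp (-u)) 0 hx
  simp only [mul_zero, integral_exp_neg_Ioi_zero, smul_eq_mul, mul_one] at this
  simpa [neg_mul] using this

lemma aux_exp_integrable (x : ℝ) (hx : 0 < x) :
    IntegrableOn (fun r : ℝ => Real.exp (-(x * r))) (Ioi 0) := by
  simpa [neg_mul] using exp_neg_integrableOn_Ioi 0 hx

lemma aux_prod {n : ℕ} (x : Fin n → ℝ) (hx : ∀ j, 0 < x j) :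
    ∫⁻ s in Set.univ.pi fun _ : Fin n => Set.Ioi (0:ℝ),
        ENNReal.ofReal (Real.exp (-(∑ j, s j * x j)))
      = ENNReal.ofReal (∏ j, (x j)⁻¹) := by
  set f : Fin n → ℝ → ℝ := fun j => (Ioi (0:ℝ)).indicator fun r => Real.exp (-(x j * r)) with hf
  have hfint : ∀ j, Integrable (f j) := by
    intro j
    rw [hf]
    rw [integrable_indicator_iff measurableSet_Ioi]
    exact aux_exp_integrable (x j) (hx j)
  have hprod : ∀ s : Fin n → ℝ,
      ENNReal.ofReal (∏ j, f j (s j))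
        = (Set.univ.pi fun _ : Fin n => Set.Ioi (0:ℝ)).indicator
            (fun s => ENNReal.ofReal (Real.exp (-(∑ j, s j * x j)))) s := by
    intro s
    by_cases hs : s ∈ Set.univ.pi fun _ : Fin n => Set.Ioi (0:ℝ)
    · rw [Set.indicator_of_mem hs]
      have : ∀ j, f j (s j) = Real.exp (-(x j * s j)) := by
        intro j
        exact Set.indicator_of_mem (hs j (Set.mem_univ j)) _
      simp_rw [this]
      rw [← Real.exp_sum]
      congr 1
      rw [← Finset.sum_neg_distrib]
      congr 1
      exact Finset.sum_congr rfl fun j _ => by ring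
    · rw [Set.indicator_of_notMem hs]
      obtain ⟨j, hj⟩ : ∃ j, s j ≤ 0 := by simpa [Set.mem_pi, not_lt] using hs
      have : f j (s j) = 0 := Set.indicator_of_notMem (by simpa using hj) _
      rw [Finset.prod_eq_zero (Finset.mem_univ j) this]
      simp
  calc ∫⁻ s in Set.univ.pi fun _ : Fin n => Set.Ioi (0:ℝ),
          ENNReal.ofReal (Real.exp (-(∑ j, s j * x j)))
      = ∫⁻ s : Fin n → ℝ, ENNReal.ofReal (∏ j, f j (s j)) := by
        rw [← lintegral_indicator (MeasurableSet.univ_pi fun _ => measurableSet_Ioi)]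
        exact lintegral_congr fun s => (hprod s).symm
    _ = ENNReal.ofReal (∫ s : Fin n → ℝ, ∏ j, f j (s j)) := by
        rw [ofReal_integral_eq_lintegral_ofReal (μ := volume) (Integrable.fintype_prod hfint)]
        filter_upwards with s
        exact Finset.prod_nonneg fun j _ => Set.indicator_nonneg (fun r _ => (exp_pos _).le) _
    _ = ENNReal.ofReal (∏ j, (x j)⁻¹) := by
        rw [integral_fintype_prod_volume_eq_prod (f := f)]
        congr 1
        refine Finset.prod_congr rfl fun j _ => ?_
        rw [hf]
        rw [integral_indicator measurableSet_Ioi]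
        exact aux_exp_real (x j) (hx j)

lemma aux_I (n : ℕ) (hn : 0 < n) (x : Fin n → ℝ) (hx : ∀ j, 0 < x j)
    (g : ℝ → ℝ) (hgmeas : Measurable g) (hgpos : ∀ r : ℝ, 0 < r → 0 < g r)
    (hgnorm : ∫ r in Set.Ioi (0 : ℝ), g r / r = 1) :
    ∫⁻ t in Ioi (0:ℝ), ENNReal.ofReal (t ^ (n - 1)) *
        ∫⁻ u in Set.univ.pi fun _ : Fin n => Set.Ioi (0:ℝ),
          ENNReal.ofReal (g (∑ j, u j) * Real.exp (-(t * ∑ j, u j * x j)))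
      = ENNReal.ofReal (∏ j, (x j)⁻¹) := by
  set S : Set (Fin n → ℝ) := Set.univ.pi fun _ : Fin n => Set.Ioi (0:ℝ) with hSdef
  have hSmeas : MeasurableSet S := MeasurableSet.univ_pi fun _ => measurableSet_Ioi
  have hσ : Measurable fun u : Fin n → ℝ => ∑ j, u j :=
    Finset.measurable_sum _ fun j _ => measurable_pi_apply j
  have hc : Measurable fun u : Fin n → ℝ => ∑ j, u j * x j :=
    Finset.measurable_sum _ fun j _ => (measurable_pi_apply j).mul_const _
  -- Step 1: rescale the inner integral
  have step1 : ∀ t : ℝ, t ∈ Ioi (0:ℝ) →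
      ENNReal.ofReal (t ^ (n - 1)) *
        ∫⁻ u in S, ENNReal.ofReal (g (∑ j, u j) * Real.exp (-(t * ∑ j, u j * x j)))
      = ENNReal.ofReal t⁻¹ *
        ∫⁻ s in S, ENNReal.ofReal (g ((∑ j, s j) / t) * Real.exp (-(∑ j, s j * x j))) := by
    intro t ht
    have ht : (0:ℝ) < t := ht
    have hmeas : Measurable fun u : Fin n → ℝ =>
        ENNReal.ofReal (g (∑ j, u j) * Real.exp (-(t * ∑ j, u j * x j))) :=
      ((hgmeas.comp hσ).mul ((hc.const_mul t).neg.exp)).ennreal_ofReal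
    have hsc := aux_scaling (f := fun u : Fin n → ℝ =>
      ENNReal.ofReal (g (∑ j, u j) * Real.exp (-(t * ∑ j, u j * x j)))) hmeas ht
    have hrw : ∀ s : Fin n → ℝ,
        ENNReal.ofReal (g (∑ j, (t⁻¹ • s) j) * Real.exp (-(t * ∑ j, (t⁻¹ • s) j * x j)))
        = ENNReal.ofReal (g ((∑ j, s j) / t) * Real.exp (-(∑ j, s j * x j))) := by
      intro s
      have h1 : ∑ j, (t⁻¹ • s) j = (∑ j, s j) / t := by
        simp only [Pi.smul_apply, smul_eq_mul, ← Finset.mul_sum]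
        rw [div_eq_inv_mul]
      have h2 : t * ∑ j, (t⁻¹ • s) j * x j = ∑ j, s j * x j := by
        simp only [Pi.smul_apply, smul_eq_mul]
        rw [Finset.mul_sum]
        refine Finset.sum_congr rfl fun j _ => ?_
        field_simp
      rw [h1, h2]
    rw [lintegral_congr hrw] at hsc
    have hsc' : ENNReal.ofReal (t ^ n) *
        (∫⁻ u in S, ENNReal.ofReal (g (∑ j, u j) * Real.exp (-(t * ∑ j, u j * x j))))
        = ∫⁻ s in S, ENNReal.ofReal (g ((∑ j, s j) / t) * Real.exp (-(∑ j, s j * x j))) :=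
      hsc.symm
    rw [← hsc']
    rw [show ENNReal.ofReal (t ^ (n-1)) = ENNReal.ofReal t⁻¹ * ENNReal.ofReal (t ^ n) by
      rw [← ENNReal.ofReal_mul (inv_nonneg.mpr ht.le)]
      congr 1
      have hpow : t ^ n = t * t ^ (n - 1) := by
        rw [← pow_succ']
        congr 1
        omega
      rw [hpow, inv_mul_cancel_left₀ ht.ne']]
    rw [mul_assoc]
  rw [setLIntegral_congr_fun measurableSet_Ioi
    step1]
  -- Step 2: push the constant inside and swap
  have hmeas2 : Measurable fun p : ℝ × (Fin n → ℝ) =>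
      ENNReal.ofReal p.1⁻¹ *
        ENNReal.ofReal (g ((∑ j, p.2 j) / p.1) * Real.exp (-(∑ j, p.2 j * x j))) :=
    (measurable_fst.inv.ennreal_ofReal).mul
      (((hgmeas.comp ((hσ.comp measurable_snd).div measurable_fst)).mul
        ((hc.comp measurable_snd).neg.exp)).ennreal_ofReal)
  have swap :
      ∫⁻ t in Ioi (0:ℝ), ENNReal.ofReal t⁻¹ *
          ∫⁻ s in S, ENNReal.ofReal (g ((∑ j, s j) / t) * Real.exp (-(∑ j, s j * x j)))
      = ∫⁻ s in S, ∫⁻ t in Ioi (0:ℝ), ENNReal.ofReal t⁻¹ *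
          ENNReal.ofReal (g ((∑ j, s j) / t) * Real.exp (-(∑ j, s j * x j))) := by
    rw [← lintegral_lintegral_swap hmeas2.aemeasurable]
    refine lintegral_congr fun t => ?_
    rw [lintegral_const_mul' _ _ ENNReal.ofReal_ne_top]
  rw [swap]
  -- Step 3: compute the inner t-integral for s ∈ S
  have step3 : ∀ s : Fin n → ℝ, s ∈ S →
      (∫⁻ t in Ioi (0:ℝ), ENNReal.ofReal t⁻¹ *
        ENNReal.ofReal (g ((∑ j, s j) / t) * Real.exp (-(∑ j, s j * x j))))
      = ENNReal.ofReal (Real.exp (-(∑ j, s j * x j))) := by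
    intro s hs
    have : Nonempty (Fin n) := Fin.pos_iff_nonempty.mp hn
    have hnne : (Finset.univ : Finset (Fin n)).Nonempty := Finset.univ_nonempty
    have ha : 0 < ∑ j, s j :=
      Finset.sum_pos (fun j _ => hs j (Set.mem_univ j)) hnne
    calc ∫⁻ t in Ioi (0:ℝ), ENNReal.ofReal t⁻¹ *
          ENNReal.ofReal (g ((∑ j, s j) / t) * Real.exp (-(∑ j, s j * x j)))
        = ∫⁻ t in Ioi (0:ℝ), ENNReal.ofReal (g ((∑ j, s j) / t) / t) *
            ENNReal.ofReal (Real.exp (-(∑ j, s j * x j))) := by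
          refine setLIntegral_congr_fun measurableSet_Ioi ?_
          intro t ht
          beta_reduce
          have ht : (0:ℝ) < t := ht
          have hgt : 0 ≤ g ((∑ j, s j) / t) := (hgpos _ (div_pos ha ht)).le
          rw [ENNReal.ofReal_mul hgt, ← mul_assoc]
          congr 1
          rw [← ENNReal.ofReal_mul (inv_nonneg.mpr ht.le), ← div_eq_inv_mul]
      _ = (∫⁻ t in Ioi (0:ℝ), ENNReal.ofReal (g ((∑ j, s j) / t) / t)) *
            ENNReal.ofReal (Real.exp (-(∑ j, s j * x j))) := by
          rw [lintegral_mul_const' _ _ ENNReal.ofReal_ne_top]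
      _ = ENNReal.ofReal (Real.exp (-(∑ j, s j * x j))) := by
          rw [aux_subst g (fun r hr => (hgpos r hr).le) ha, aux_gnorm g hgmeas (fun r hr => (hgpos r hr).le) hgnorm,
            one_mul]
  rw [setLIntegral_congr_fun hSmeas step3]
  exact aux_prod x hx

/-- Generalized Feynman–Schwinger parametrization. For `x_1, …, x_n > 0` and a
measurable `g : (0,∞) → (0,∞)` with `∫_0^∞ g(r)/r dr = 1`,
`1/(x_1 ⋯ x_n) = ∫_0^∞ dt tⁿ⁻¹ ∫_{(0,∞)ⁿ} du g(|u|₁) e^{−t u·x}`. -/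
theorem statement3 (n : ℕ) (hn : 0 < n) (x : Fin n → ℝ) (hx : ∀ j, 0 < x j)
    (g : ℝ → ℝ) (hgmeas : Measurable g) (hgpos : ∀ r : ℝ, 0 < r → 0 < g r)
    (hgnorm : ∫ r in Set.Ioi (0 : ℝ), g r / r = 1) :
    1 / ∏ j, x j =
      ∫ t in Set.Ioi (0 : ℝ),
        t ^ (n - 1) *
          ∫ u in Set.univ.pi fun _ : Fin n => Set.Ioi (0 : ℝ),
            g (∑ j, u j) * Real.exp (-(t * ∑ j, u j * x j)) := by
  have hSmeas : MeasurableSet (Set.univ.pi fun _ : Fin n => Set.Ioi (0:ℝ)) :=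
    MeasurableSet.univ_pi fun _ => measurableSet_Ioi
  have hσ : Measurable fun u : Fin n → ℝ => ∑ j, u j :=
    Finset.measurable_sum _ fun j _ => measurable_pi_apply j
  have hc : Measurable fun u : Fin n → ℝ => ∑ j, u j * x j :=
    Finset.measurable_sum _ fun j _ => (measurable_pi_apply j).mul_const _
  have hFmeas : Measurable fun p : ℝ × (Fin n → ℝ) =>
      ENNReal.ofReal (g (∑ j, p.2 j) * Real.exp (-(p.1 * ∑ j, p.2 j * x j))) :=
    ((hgmeas.comp (hσ.comp measurable_snd)).mul
      ((measurable_fst.mul (hc.comp measurable_snd)).neg.exp)).ennreal_ofReal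
  set Φ : ℝ → ENNReal := fun t => ENNReal.ofReal (t ^ (n - 1)) *
      ∫⁻ u in Set.univ.pi fun _ : Fin n => Set.Ioi (0:ℝ),
        ENNReal.ofReal (g (∑ j, u j) * Real.exp (-(t * ∑ j, u j * x j))) with hΦdef
  have hΦmeas : Measurable Φ := by
    apply Measurable.mul
    · exact (measurable_id.pow_const _).ennreal_ofReal
    · exact Measurable.lintegral_prod_right hFmeas
  have hI := aux_I n hn x hx g hgmeas hgpos hgnorm
  have hItop : ∫⁻ t in Ioi (0:ℝ), Φ t ≠ ⊤ := by
    rw [hΦdef]; rw [hI]; exact ENNReal.ofReal_ne_top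
  -- inner Bochner integral equals toReal of inner lintegral
  have hB : ∀ t : ℝ, (∫ u in Set.univ.pi fun _ : Fin n => Set.Ioi (0:ℝ),
        g (∑ j, u j) * Real.exp (-(t * ∑ j, u j * x j)))
      = (∫⁻ u in Set.univ.pi fun _ : Fin n => Set.Ioi (0:ℝ),
          ENNReal.ofReal (g (∑ j, u j) * Real.exp (-(t * ∑ j, u j * x j)))).toReal := by
    intro t
    rw [integral_eq_lintegral_of_nonneg_ae]
    · rw [Filter.EventuallyLE, ae_restrict_iff' hSmeas]
      filter_upwards with u hu
      have : Nonempty (Fin n) := Fin.pos_iff_nonempty.mp hn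
      have ha : 0 < ∑ j, u j :=
        Finset.sum_pos (fun j _ => hu j (Set.mem_univ j)) Finset.univ_nonempty
      simpa using mul_nonneg (hgpos _ ha).le (exp_pos _).le
    · exact ((hgmeas.comp hσ).mul ((measurable_const.mul hc).neg.exp)).aestronglyMeasurable
  -- outer integrand equals toReal of Φ on Ioi 0
  have houter : ∀ t ∈ Ioi (0:ℝ),
      t ^ (n - 1) * (∫ u in Set.univ.pi fun _ : Fin n => Set.Ioi (0:ℝ),
        g (∑ j, u j) * Real.exp (-(t * ∑ j, u j * x j))) = (Φ t).toReal := by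
    intro t ht
    have ht : (0:ℝ) < t := ht
    rw [hB t, hΦdef, ENNReal.toReal_mul, ENNReal.toReal_ofReal (pow_nonneg ht.le _)]
  rw [setIntegral_congr_fun measurableSet_Ioi houter]
  -- convert the outer integral to a lintegral
  have key : (∫ t in Ioi (0:ℝ), (Φ t).toReal)
      = (∫⁻ t in Ioi (0:ℝ), Φ t).toReal := by
    rw [integral_eq_lintegral_of_nonneg_ae
      (Filter.Eventually.of_forall fun t => ENNReal.toReal_nonneg)
      hΦmeas.ennreal_toReal.aestronglyMeasurable]
    congr 1
    apply lintegral_congr_ae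
    filter_upwards [ae_lt_top hΦmeas hItop] with t htlt
    exact ENNReal.ofReal_toReal htlt.ne
  rw [key, hI, ENNReal.toReal_ofReal (Finset.prod_nonneg fun j _ => (inv_nonneg.mpr (hx j).le)),
    one_div, ← Finset.prod_inv_distrib]
end

section
/- Let μ be a locally finite Borel measure on ℝ. Then for Lebesgue-almost every x₀ ∈ ℝ the following holds: for every c₀ > 0 there is a constant C = C(x₀, c₀, μ) < ∞ such that for all real numbers 0 < ε < δ < c₀ and all t > 0 one has (i) ∫_{[x₀, x₀+δ]} e^{−t(x−x₀)} dμ(x) ≤ C (1 − e^{−tδ})/t, and (ii) ∫_{[x₀+ε, x₀+δ]} e^{−t(x−x₀)} dμ(x) ≤ C e^{−tε/2} (1 − e^{−tδ/2})/(t/2) ≤ C e^{−tε/2}/(t/2). The exceptional null set of points x₀ does not depend on c₀, ε or δ. -/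
open MeasureTheory
open Set

lemma key_lintegral (μ : Measure ℝ) (a K δ t : ℝ) (hK : 0 ≤ K) (hδ : 0 < δ) (ht : 0 < t)
    (hμ : ∀ r : ℝ, 0 < r → r ≤ 2*δ → μ (Icc a (a+r)) ≤ ENNReal.ofReal (K*r)) :
    ∫⁻ x in Icc a (a+δ), ENNReal.ofReal (Real.exp (-(t*(x-a)))) ∂μ ≤
      ENNReal.ofReal (8*K * ((1 - Real.exp (-(t*δ)))/t)) := by
  have he : (2.7182818283 : ℝ) < Real.exp 1 := Real.exp_one_gt_d9
  have hE1 : Real.exp (-(t*δ)) < 1 := by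
    apply Real.exp_lt_one_iff.2; nlinarith
  rcases le_or_gt (t*δ) 1 with h1 | h1
  · -- small tδ : bound integrand by 1
    calc ∫⁻ x in Icc a (a+δ), ENNReal.ofReal (Real.exp (-(t*(x-a)))) ∂μ
        ≤ ∫⁻ _x in Icc a (a+δ), 1 ∂μ := by
          refine setLIntegral_mono measurable_const (fun x hx => ?_)
          have : Real.exp (-(t*(x-a))) ≤ 1 := by
            apply Real.exp_le_one_iff.2; nlinarith [hx.1]
          simpa using ENNReal.ofReal_le_ofReal this
      _ = μ (Icc a (a+δ)) := by simp
      _ ≤ ENNReal.ofReal (K*δ) := hμ δ hδ (by linarith)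
      _ ≤ ENNReal.ofReal (8*K * ((1 - Real.exp (-(t*δ)))/t)) := by
          apply ENNReal.ofReal_le_ofReal
          have h3 : t*δ + 1 ≤ Real.exp (t*δ) := Real.add_one_le_exp (t*δ)
          have h4 : Real.exp (-(t*δ)) * Real.exp (t*δ) = 1 := by
            rw [← Real.exp_add]; simp
          have h5 : (0:ℝ) < Real.exp (-(t*δ)) := Real.exp_pos _
          have h6 : Real.exp (t*δ) ≤ Real.exp 1 := Real.exp_le_exp.2 h1
          have h7 : Real.exp 1 < 2.72 := lt_trans Real.exp_one_lt_d9 (by norm_num)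
          have h8 : Real.exp (-(t*δ)) * (t*δ+1) ≤ 1 := by nlinarith
          have hu : (0:ℝ) < t*δ := by positivity
          have hE2 : 1 ≤ 3 * Real.exp (-(t*δ)) := by nlinarith
          have h9 : t*δ ≤ 3*(1 - Real.exp (-(t*δ))) := by
            nlinarith [mul_le_mul_of_nonneg_right hE2 hu.le]
          rw [show 8*K * ((1 - Real.exp (-(t*δ)))/t) = (8*K*(1 - Real.exp (-(t*δ))))/t by ring,
            le_div_iff₀ ht]
          nlinarith [mul_le_mul_of_nonneg_left h9 hK,
            mul_nonneg hK (sub_nonneg.2 hE1.le)]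
  · -- large tδ : decompose into intervals of length 1/t
    have h2e : (0:ℝ) < 1 - 2/Real.exp 1 := by
      rw [sub_pos, div_lt_one (Real.exp_pos 1)]; linarith
    calc ∫⁻ x in Icc a (a+δ), ENNReal.ofReal (Real.exp (-(t*(x-a)))) ∂μ
        ≤ ∫⁻ x in ⋃ k : ℕ, (Icc a (a+δ) ∩ Ico (a + k/t) (a + (k+1)/t)),
            ENNReal.ofReal (Real.exp (-(t*(x-a)))) ∂μ := by
          apply lintegral_mono_set
          intro x hx
          have hfl := Nat.floor_le (show (0:ℝ) ≤ t*(x-a) by nlinarith [hx.1])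
          have hlow : a + (⌊t*(x-a)⌋₊ : ℝ)/t ≤ x := by
            have : (⌊t*(x-a)⌋₊ : ℝ)/t ≤ x - a := by
              rw [div_le_iff₀ ht]; nlinarith
            linarith
          have hfu := Nat.lt_floor_add_one (t*(x-a))
          have hhigh : x < a + ((⌊t*(x-a)⌋₊ : ℝ)+1)/t := by
            have : x - a < ((⌊t*(x-a)⌋₊ : ℝ)+1)/t := by
              rw [lt_div_iff₀ ht]; nlinarith
            linarith
          exact mem_iUnion.2 ⟨⌊t*(x-a)⌋₊, hx, hlow, hhigh⟩
      _ ≤ ∑' k : ℕ, ∫⁻ x in Icc a (a+δ) ∩ Ico (a + k/t) (a + (k+1)/t),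
            ENNReal.ofReal (Real.exp (-(t*(x-a)))) ∂μ := lintegral_iUnion_le _ _
      _ ≤ ∑' k : ℕ, ENNReal.ofReal (K/t) * (ENNReal.ofReal (2/Real.exp 1))^k := by
          refine ENNReal.tsum_le_tsum (fun k => ?_)
          have hrk : (0:ℝ) < min δ ((k+1)/t) := by
            apply lt_min hδ; positivity
          calc ∫⁻ x in Icc a (a+δ) ∩ Ico (a + k/t) (a + (k+1)/t),
                ENNReal.ofReal (Real.exp (-(t*(x-a)))) ∂μ
              ≤ ∫⁻ _x in Icc a (a+δ) ∩ Ico (a + k/t) (a + (k+1)/t),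
                ENNReal.ofReal (Real.exp (-(k:ℝ))) ∂μ := by
                refine setLIntegral_mono measurable_const (fun x hx => ?_)
                apply ENNReal.ofReal_le_ofReal
                apply Real.exp_le_exp.2
                have : (k:ℝ)/t ≤ x - a := by linarith [hx.2.1]
                rw [div_le_iff₀ ht] at this
                nlinarith
            _ = ENNReal.ofReal (Real.exp (-(k:ℝ))) *
                  μ (Icc a (a+δ) ∩ Ico (a + k/t) (a + (k+1)/t)) := setLIntegral_const _ _
            _ ≤ ENNReal.ofReal (Real.exp (-(k:ℝ))) *
                  ENNReal.ofReal (K * min δ ((k+1)/t)) := by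
                gcongr
                refine le_trans (measure_mono ?_) (hμ _ hrk (le_trans (min_le_left _ _) (by linarith)))
                intro x hx
                refine ⟨hx.1.1, ?_⟩
                rcases min_cases δ ((k+1)/t) with h | h
                · rw [h.1]; exact hx.1.2
                · rw [h.1]; linarith [hx.2.2]
            _ ≤ ENNReal.ofReal (K/t) * (ENNReal.ofReal (2/Real.exp 1))^k := by
                rw [← ENNReal.ofReal_mul (le_of_lt (Real.exp_pos _)),
                  ← ENNReal.ofReal_pow (by positivity), ← ENNReal.ofReal_mul (by positivity)]
                apply ENNReal.ofReal_le_ofReal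
                have hk2 : ((k:ℝ)+1) ≤ 2^k := by
                  exact_mod_cast (Nat.lt_two_pow_self (n := k))
                have hek : Real.exp (-(k:ℝ)) = (Real.exp 1)⁻¹ ^ k := by
                  rw [← Real.exp_neg, ← Real.exp_nat_mul]; ring_nf
                have hmin : min δ ((k+1)/t) ≤ ((k:ℝ)+1)/t := min_le_right _ _
                have hpos : (0:ℝ) < Real.exp 1 := Real.exp_pos 1
                calc Real.exp (-(k:ℝ)) * (K * min δ ((k+1)/t))
                    ≤ Real.exp (-(k:ℝ)) * (K * (((k:ℝ)+1)/t)) := by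
                      have := Real.exp_pos (-(k:ℝ)); nlinarith [mul_le_mul_of_nonneg_left hmin hK]
                  _ = (K/t) * (((k:ℝ)+1) * (Real.exp 1)⁻¹ ^ k) := by rw [hek]; ring
                  _ ≤ (K/t) * (2^k * (Real.exp 1)⁻¹ ^ k) := by
                      have : (0:ℝ) ≤ (Real.exp 1)⁻¹ ^ k := by positivity
                      have hKt : (0:ℝ) ≤ K/t := by positivity
                      nlinarith [mul_le_mul_of_nonneg_right hk2 this]
                  _ = K/t * (2/Real.exp 1)^k := by rw [← mul_pow]; ring_nf
      _ = ENNReal.ofReal (K/t) * (1 - ENNReal.ofReal (2/Real.exp 1))⁻¹ := by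
          rw [ENNReal.tsum_mul_left, ENNReal.tsum_geometric]
      _ ≤ ENNReal.ofReal (K/t) * ENNReal.ofReal 4 := by
          gcongr
          rw [← ENNReal.ofReal_one, ← ENNReal.ofReal_sub _ (by positivity),
            ← ENNReal.ofReal_inv_of_pos h2e]
          apply ENNReal.ofReal_le_ofReal
          have h24 : 2/Real.exp 1 ≤ 3/4 := by
            rw [div_le_div_iff₀ (Real.exp_pos 1) (by norm_num)]; nlinarith
          calc (1 - 2/Real.exp 1)⁻¹ ≤ ((1:ℝ)/4)⁻¹ := by
                apply inv_anti₀ (by norm_num); linarith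
            _ = 4 := by norm_num
      _ = ENNReal.ofReal (K/t*4) := by
          rw [ENNReal.ofReal_mul (by positivity)]
      _ ≤ ENNReal.ofReal (8*K * ((1 - Real.exp (-(t*δ)))/t)) := by
          apply ENNReal.ofReal_le_ofReal
          have hE : Real.exp (-(t*δ)) ≤ 1/2 := by
            have h6 : Real.exp (-(t*δ)) ≤ Real.exp (-1) := Real.exp_le_exp.2 (by linarith)
            have : Real.exp (-1) = (Real.exp 1)⁻¹ := Real.exp_neg 1
            rw [this] at h6
            have : (Real.exp 1)⁻¹ ≤ 1/2 := by
              rw [inv_le_iff_one_le_mul₀ (Real.exp_pos 1)] <;> nlinarith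
            linarith
          have h48 : 4*K ≤ 8*K*(1 - Real.exp (-(t*δ))) := by
            nlinarith [mul_le_mul_of_nonneg_left hE hK]
          rw [show K/t*4 = (4*K)/t by ring,
            show 8*K * ((1 - Real.exp (-(t*δ)))/t) = (8*K*(1 - Real.exp (-(t*δ))))/t by ring,
            div_le_div_iff₀ ht ht]
          nlinarith [mul_le_mul_of_nonneg_right h48 ht.le]

lemma key_integral (μ : Measure ℝ) (a K δ t : ℝ) (hK : 0 ≤ K) (hδ : 0 < δ) (ht : 0 < t)
    (hμ : ∀ r : ℝ, 0 < r → r ≤ 2*δ → μ (Icc a (a+r)) ≤ ENNReal.ofReal (K*r)) :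
    ∫ x in Icc a (a+δ), Real.exp (-(t*(x-a))) ∂μ ≤ 8*K * ((1 - Real.exp (-(t*δ)))/t) := by
  have hc : Continuous fun x : ℝ => Real.exp (-(t*(x-a))) := by fun_prop
  rw [integral_eq_lintegral_of_nonneg_ae
    (Filter.Eventually.of_forall fun x => (Real.exp_pos _).le)
    hc.aestronglyMeasurable]
  refine ENNReal.toReal_le_of_le_ofReal ?_ (key_lintegral μ a K δ t hK hδ ht hμ)
  have : Real.exp (-(t*δ)) ≤ 1 := Real.exp_le_one_iff.2 (by nlinarith)
  have : (0:ℝ) ≤ (1 - Real.exp (-(t*δ)))/t := div_nonneg (by linarith) ht.le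
  positivity

/-- For a locally finite Borel measure `μ` on `ℝ`, for Lebesgue-a.e. `x₀` the
following holds: for every `c₀ > 0` there is `C < ∞` such that for all `0 < ε < δ < c₀` and all
`t > 0`, (i) `∫_{[x₀,x₀+δ]} e^{−t(x−x₀)} dμ ≤ C(1−e^{−tδ})/t` and
(ii) `∫_{[x₀+ε,x₀+δ]} e^{−t(x−x₀)} dμ ≤ C e^{−tε/2}(1−e^{−tδ/2})/(t/2) ≤ C e^{−tε/2}/(t/2)`. -/
theorem statement4 (μ : Measure ℝ) [IsLocallyFiniteMeasure μ] :
    ∀ᵐ x₀ : ℝ ∂(volume : Measure ℝ), ∀ c₀ : ℝ, 0 < c₀ → ∃ C : ℝ,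
      ∀ ε δ t : ℝ, 0 < ε → ε < δ → δ < c₀ → 0 < t →
        (∫ x in Set.Icc x₀ (x₀ + δ), Real.exp (-(t * (x - x₀))) ∂μ ≤
            C * ((1 - Real.exp (-(t * δ))) / t)) ∧
        (∫ x in Set.Icc (x₀ + ε) (x₀ + δ), Real.exp (-(t * (x - x₀))) ∂μ ≤
            C * Real.exp (-(t * ε / 2)) * ((1 - Real.exp (-(t * δ / 2))) / (t / 2))) ∧
        (C * Real.exp (-(t * ε / 2)) * ((1 - Real.exp (-(t * δ / 2))) / (t / 2)) ≤
            C * Real.exp (-(t * ε / 2)) / (t / 2)) := by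
  filter_upwards [Besicovitch.ae_tendsto_rnDeriv μ volume, Measure.rnDeriv_lt_top μ volume]
    with x₀ htend hlt
  intro c₀ hc₀
  set L : ENNReal := μ.rnDeriv volume x₀ with hLdef
  have hL1 : L < L + 1 := ENNReal.lt_add_right hlt.ne one_ne_zero
  have hev := htend.eventually_lt_const hL1
  obtain ⟨r₀, hr₀, hsub⟩ := mem_nhdsGT_iff_exists_Ioc_subset.1 hev
  rw [Set.mem_Ioi] at hr₀
  set M : ℝ := 2 * (L+1).toReal with hMdef
  have hM : 0 ≤ M := by positivity
  have hLtop : L + 1 ≠ ⊤ := ENNReal.add_ne_top.2 ⟨hlt.ne, ENNReal.one_ne_top⟩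
  have hball : ∀ r : ℝ, 0 < r → r ≤ r₀ → μ (Icc x₀ (x₀+r)) ≤ ENNReal.ofReal (M * r) := by
    intro r hr hrr₀
    have hmem : μ (Metric.closedBall x₀ r) / volume (Metric.closedBall x₀ r) < L + 1 :=
      hsub ⟨hr, hrr₀⟩
    rw [Real.volume_closedBall] at hmem
    have hv0 : ENNReal.ofReal (2*r) ≠ 0 := by
      simp [ENNReal.ofReal_eq_zero]; linarith
    have hvt : ENNReal.ofReal (2*r) ≠ ⊤ := ENNReal.ofReal_ne_top
    have h2 : μ (Metric.closedBall x₀ r) < (L+1) * ENNReal.ofReal (2*r) :=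
      (ENNReal.div_lt_iff (Or.inl hv0) (Or.inl hvt)).1 hmem
    have hsub2 : Icc x₀ (x₀+r) ⊆ Metric.closedBall x₀ r := by
      intro x hx
      rw [Metric.mem_closedBall, Real.dist_eq, abs_le]
      constructor <;> [linarith [hx.1]; linarith [hx.2]]
    calc μ (Icc x₀ (x₀+r)) ≤ μ (Metric.closedBall x₀ r) := measure_mono hsub2
      _ ≤ (L+1) * ENNReal.ofReal (2*r) := h2.le
      _ = ENNReal.ofReal (M * r) := by
          rw [← ENNReal.ofReal_toReal hLtop, ← ENNReal.ofReal_mul ENNReal.toReal_nonneg]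
          congr 1; rw [hMdef]; ring
  set B : ℝ := (μ (Icc x₀ (x₀ + 2*c₀))).toReal with hBdef
  have hB : 0 ≤ B := ENNReal.toReal_nonneg
  set K : ℝ := max M (B/r₀) with hKdef
  have hKnn : 0 ≤ K := le_trans hM (le_max_left _ _)
  have hKbound : ∀ r : ℝ, 0 < r → r ≤ 2*c₀ → μ (Icc x₀ (x₀+r)) ≤ ENNReal.ofReal (K*r) := by
    intro r hr hr2
    rcases le_or_gt r r₀ with h | h
    · refine (hball r hr h).trans (ENNReal.ofReal_le_ofReal ?_)
      exact mul_le_mul_of_nonneg_right (le_max_left _ _) hr.le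
    · have h1 : μ (Icc x₀ (x₀+r)) ≤ μ (Icc x₀ (x₀ + 2*c₀)) :=
        measure_mono (Icc_subset_Icc le_rfl (by linarith))
      have h2 : μ (Icc x₀ (x₀ + 2*c₀)) = ENNReal.ofReal B :=
        (ENNReal.ofReal_toReal measure_Icc_lt_top.ne).symm
      refine h1.trans (h2.le.trans (ENNReal.ofReal_le_ofReal ?_))
      have hBr : B/r₀ ≤ K := le_max_right _ _
      have : B = (B/r₀) * r₀ := by field_simp
      calc B = (B/r₀) * r₀ := this
        _ ≤ K * r := by
            apply mul_le_mul hBr h.le hr₀.le hKnn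
  refine ⟨8*K, fun ε δ t hε hεδ hδc ht => ?_⟩
  have hδ : 0 < δ := hε.trans hεδ
  have hμδ : ∀ r : ℝ, 0 < r → r ≤ 2*δ → μ (Icc x₀ (x₀+r)) ≤ ENNReal.ofReal (K*r) :=
    fun r hr hr2 => hKbound r hr (by linarith)
  refine ⟨key_integral μ x₀ K δ t hKnn hδ ht hμδ, ?_, ?_⟩
  · -- part (ii)
    have hcont1 : Continuous fun x : ℝ => Real.exp (-(t*(x-x₀))) := by fun_prop
    have hcont2 : Continuous fun x : ℝ => Real.exp (-(t*ε/2)) * Real.exp (-(t/2*(x-x₀))) := by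
      fun_prop
    have hint2 : IntegrableOn (fun x : ℝ => Real.exp (-(t*ε/2)) * Real.exp (-(t/2*(x-x₀))))
        (Icc x₀ (x₀+δ)) μ := hcont2.integrableOn_Icc
    calc ∫ x in Icc (x₀+ε) (x₀+δ), Real.exp (-(t*(x-x₀))) ∂μ
        ≤ ∫ x in Icc (x₀+ε) (x₀+δ), Real.exp (-(t*ε/2)) * Real.exp (-(t/2*(x-x₀))) ∂μ := by
          refine setIntegral_mono_on hcont1.integrableOn_Icc
            (hint2.mono_set (Icc_subset_Icc (by linarith) le_rfl)) measurableSet_Icc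
            (fun x hx => ?_)
          rw [← Real.exp_add]
          apply Real.exp_le_exp.2
          have := hx.1
          nlinarith
      _ ≤ ∫ x in Icc x₀ (x₀+δ), Real.exp (-(t*ε/2)) * Real.exp (-(t/2*(x-x₀))) ∂μ := by
          refine setIntegral_mono_set hint2
            (Filter.Eventually.of_forall fun x => by positivity)
            (HasSubset.Subset.eventuallyLE (Icc_subset_Icc (by linarith) le_rfl))
      _ = Real.exp (-(t*ε/2)) * ∫ x in Icc x₀ (x₀+δ), Real.exp (-(t/2*(x-x₀))) ∂μ :=
          integral_const_mul _ _
      _ ≤ Real.exp (-(t*ε/2)) * (8*K * ((1 - Real.exp (-(t/2*δ)))/(t/2))) := by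
          apply mul_le_mul_of_nonneg_left
            (key_integral μ x₀ K δ (t/2) hKnn hδ (half_pos ht) hμδ) (Real.exp_pos _).le
      _ = 8*K * Real.exp (-(t*ε/2)) * ((1 - Real.exp (-(t*δ/2)))/(t/2)) := by
          rw [show t/2*δ = t*δ/2 by ring]; ring
  · -- part (iii)
    have h0 : (0:ℝ) ≤ 8*K * Real.exp (-(t*ε/2)) := by positivity
    rw [show 8*K * Real.exp (-(t*ε/2)) * ((1 - Real.exp (-(t*δ/2)))/(t/2))
        = (8*K * Real.exp (-(t*ε/2)) * (1 - Real.exp (-(t*δ/2))))/(t/2) by ring,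
      div_le_div_iff₀ (half_pos ht) (half_pos ht)]
    nlinarith [mul_nonneg (mul_nonneg h0 (Real.exp_pos (-(t*δ/2))).le) (half_pos ht).le]
end

section
/- Let f : ℝ → ℝ (or ℂ) be locally integrable and suppose the limit ℓ := lim_{t→∞} f(t) exists. Then lim_{s↓0} ( −1/ln s ) ∫_1^∞ t^{−1} e^{−st} f(t) dt = ℓ. -/
open MeasureTheory Filter

lemma aux_integral_exp (s c : ℝ) (hs : 0 < s) :
    ∫ t in Set.Ioi c, Real.exp (-(s*t)) = s⁻¹ * Real.exp (-(s*c)) := by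
  have := MeasureTheory.integral_comp_mul_left_Ioi (fun u => Real.exp (-u)) c hs
  simpa [smul_eq_mul, integral_exp_neg_Ioi, integral_exp_Iic] using this

lemma weight_integrable {s : ℝ} (hs : 0 < s) {a : ℝ} (ha : 1 ≤ a) :
    IntegrableOn (fun t => t⁻¹ * Real.exp (-(s*t))) (Set.Ioi a) := by
  have h1 : IntegrableOn (fun t => Real.exp (-s*t)) (Set.Ioi a) :=
    exp_neg_integrableOn_Ioi a hs
  refine h1.mono' ?_ ?_
  · exact ((measurable_inv.mul ((measurable_const.mul measurable_id').neg.exp)).aestronglyMeasurable)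
  · filter_upwards [ae_restrict_mem measurableSet_Ioi] with t ht
    have ht1 : (1:ℝ) ≤ t := ha.trans ht.le
    have h0 : (0:ℝ) < t := lt_of_lt_of_le one_pos ht1
    have : t⁻¹ ≤ 1 := inv_le_one_of_one_le₀ ht1
    rw [Real.norm_eq_abs, abs_mul, abs_of_pos (inv_pos.2 h0), abs_of_pos (Real.exp_pos _),
      neg_mul]
    calc t⁻¹ * Real.exp (-(s*t)) ≤ 1 * Real.exp (-(s*t)) := by
          exact mul_le_mul_of_nonneg_right this (Real.exp_pos _).le
      _ = Real.exp (-(s*t)) := one_mul _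

lemma inv_integrable_Ioc {a b : ℝ} (ha : 0 < a) :
    IntegrableOn (fun t : ℝ => t⁻¹) (Set.Ioc a b) := by
  have hc : ContinuousOn (fun t : ℝ => t⁻¹) (Set.Icc a b) := by
    apply ContinuousOn.inv₀ continuousOn_id
    intro x hx; exact ne_of_gt (lt_of_lt_of_le ha hx.1)
  exact (hc.integrableOn_compact isCompact_Icc).mono_set Set.Ioc_subset_Icc_self

lemma integral_inv_Ioc {a b : ℝ} (ha : 0 < a) (hab : a ≤ b) :
    ∫ t in Set.Ioc a b, t⁻¹ = Real.log (b / a) := by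
  rw [← intervalIntegral.integral_of_le hab]
  exact integral_inv_of_pos ha (lt_of_lt_of_le ha hab)

lemma weight_upper {s : ℝ} (hs : 0 < s) (hs1 : s < 1) :
    ∫ t in Set.Ioi (1:ℝ), t⁻¹ * Real.exp (-(s*t)) ≤ -Real.log s + 1 := by
  have hinv : (1:ℝ) ≤ s⁻¹ := (one_le_inv₀ hs).2 hs1.le
  have hsplit : Set.Ioc (1:ℝ) s⁻¹ ∪ Set.Ioi s⁻¹ = Set.Ioi (1:ℝ) :=
    Set.Ioc_union_Ioi_eq_Ioi hinv
  have hw1 : IntegrableOn (fun t => t⁻¹ * Real.exp (-(s*t))) (Set.Ioc 1 s⁻¹) :=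
    (weight_integrable hs le_rfl).mono_set (by rw [← hsplit]; exact Set.subset_union_left)
  have hw2 : IntegrableOn (fun t => t⁻¹ * Real.exp (-(s*t))) (Set.Ioi s⁻¹) :=
    weight_integrable hs hinv
  rw [← hsplit, setIntegral_union (Set.Ioc_disjoint_Ioi le_rfl) measurableSet_Ioi hw1 hw2]
  have h1 : ∫ t in Set.Ioc (1:ℝ) s⁻¹, t⁻¹ * Real.exp (-(s*t)) ≤ -Real.log s := by
    have : ∫ t in Set.Ioc (1:ℝ) s⁻¹, t⁻¹ * Real.exp (-(s*t)) ≤ ∫ t in Set.Ioc (1:ℝ) s⁻¹, t⁻¹ := by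
      refine setIntegral_mono_on hw1 (inv_integrable_Ioc one_pos) measurableSet_Ioc ?_
      intro t ht
      have h0 : (0:ℝ) < t := lt_trans one_pos ht.1
      nth_rewrite 2 [← mul_one t⁻¹]
      exact mul_le_mul_of_nonneg_left (Real.exp_le_one_iff.2 (by nlinarith)) (inv_pos.2 h0).le
    rw [integral_inv_Ioc one_pos hinv, div_one, Real.log_inv] at this
    exact this
  have h2 : ∫ t in Set.Ioi s⁻¹, t⁻¹ * Real.exp (-(s*t)) ≤ 1 := by
    have hb : ∫ t in Set.Ioi s⁻¹, t⁻¹ * Real.exp (-(s*t)) ≤ ∫ t in Set.Ioi s⁻¹, s * Real.exp (-(s*t)) := by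
      refine setIntegral_mono_on hw2 ?_ measurableSet_Ioi ?_
      · exact (((exp_neg_integrableOn_Ioi s⁻¹ hs).congr_fun (fun x _ => by rw [neg_mul]) measurableSet_Ioi)).const_mul s
      · intro t ht
        have h0 : (0:ℝ) < t := lt_trans (inv_pos.2 hs) ht
        have : t⁻¹ ≤ s := by
          rw [inv_le_comm₀ h0 hs]; exact (le_of_lt ht)
        exact mul_le_mul_of_nonneg_right this (Real.exp_pos _).le
    have : ∫ t in Set.Ioi s⁻¹, s * Real.exp (-(s*t)) = Real.exp (-1) := by
      rw [MeasureTheory.integral_const_mul, aux_integral_exp s s⁻¹ hs,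
        mul_inv_cancel₀ (ne_of_gt hs)]
      field_simp
    rw [this] at hb
    exact hb.trans (by norm_num [Real.exp_le_one_iff])
  linarith

lemma weight_lower {s : ℝ} (hs : 0 < s) (hs1 : s < 1) :
    -Real.log s - 1 ≤ ∫ t in Set.Ioi (1:ℝ), t⁻¹ * Real.exp (-(s*t)) := by
  have hinv : (1:ℝ) ≤ s⁻¹ := (one_le_inv₀ hs).2 hs1.le
  have hw : IntegrableOn (fun t => t⁻¹ * Real.exp (-(s*t))) (Set.Ioi 1) :=
    weight_integrable hs le_rfl
  have hw1 : IntegrableOn (fun t => t⁻¹ * Real.exp (-(s*t))) (Set.Ioc 1 s⁻¹) :=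
    hw.mono_set Set.Ioc_subset_Ioi_self
  have hmono : ∫ t in Set.Ioc (1:ℝ) s⁻¹, t⁻¹ * Real.exp (-(s*t))
      ≤ ∫ t in Set.Ioi (1:ℝ), t⁻¹ * Real.exp (-(s*t)) := by
    refine setIntegral_mono_set hw ?_ (HasSubset.Subset.eventuallyLE Set.Ioc_subset_Ioi_self)
    filter_upwards [ae_restrict_mem measurableSet_Ioi] with t ht
    have h0 : (0:ℝ) < t := lt_trans one_pos ht
    positivity
  have hsub : IntegrableOn (fun t : ℝ => t⁻¹ - s) (Set.Ioc 1 s⁻¹) :=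
    (inv_integrable_Ioc one_pos).sub (integrableOn_const measure_Ioc_lt_top.ne)
  have hlow : ∫ t in Set.Ioc (1:ℝ) s⁻¹, (t⁻¹ - s)
      ≤ ∫ t in Set.Ioc (1:ℝ) s⁻¹, t⁻¹ * Real.exp (-(s*t)) := by
    refine setIntegral_mono_on hsub hw1 measurableSet_Ioc ?_
    intro t ht
    have h0 : (0:ℝ) < t := lt_trans one_pos ht.1
    have hexp : 1 - s*t ≤ Real.exp (-(s*t)) := by
      have := Real.add_one_le_exp (-(s*t)); linarith
    have : t⁻¹ - s = t⁻¹ * (1 - s*t) := by field_simp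
    rw [this]
    exact mul_le_mul_of_nonneg_left hexp (inv_pos.2 h0).le
  have hval : ∫ t in Set.Ioc (1:ℝ) s⁻¹, (t⁻¹ - s) = -Real.log s - 1 + s := by
    rw [MeasureTheory.integral_sub (inv_integrable_Ioc one_pos)
      (integrableOn_const measure_Ioc_lt_top.ne),
      integral_inv_Ioc one_pos hinv, setIntegral_const, div_one, Real.log_inv,
      Real.volume_real_Ioc_of_le hinv, smul_eq_mul]
    field_simp
    ring
  have : -Real.log s - 1 ≤ ∫ t in Set.Ioc (1:ℝ) s⁻¹, (t⁻¹ - s) := by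
    rw [hval]; linarith
  linarith

lemma gpart_bound (f : ℝ → ℝ) (hf : LocallyIntegrable f (volume : Measure ℝ)) (ℓ : ℝ)
    {s A c : ℝ} (hs : 0 < s) (hA : 1 ≤ A) (hc : 0 ≤ c)
    (hb : ∀ t, A < t → |f t - ℓ| ≤ c) :
    IntegrableOn (fun t => t⁻¹ * Real.exp (-(s*t)) * (f t - ℓ)) (Set.Ioi 1) ∧
    ‖∫ t in Set.Ioi (1:ℝ), t⁻¹ * Real.exp (-(s*t)) * (f t - ℓ)‖
      ≤ (∫ t in Set.Ioc (1:ℝ) A, |f t - ℓ|)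
        + c * ∫ t in Set.Ioi (1:ℝ), t⁻¹ * Real.exp (-(s*t)) := by
  set g : ℝ → ℝ := fun t => f t - ℓ with hg
  set h : ℝ → ℝ := fun t => t⁻¹ * Real.exp (-(s*t)) * g t with hh
  have hg_li : LocallyIntegrable g volume := hf.sub (locallyIntegrable_const ℓ)
  have hgI : IntegrableOn (fun t => |g t|) (Set.Ioc 1 A) :=
    ((hg_li.integrableOn_isCompact isCompact_Icc).mono_set Set.Ioc_subset_Icc_self).abs
  have hh_meas : AEStronglyMeasurable h volume := by
    exact ((measurable_inv.mul ((measurable_const.mul measurable_id').neg.exp)).aestronglyMeasurable).mul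
      hg_li.aestronglyMeasurable
  have key : ∀ t : ℝ, 1 ≤ t → ‖h t‖ = t⁻¹ * Real.exp (-(s*t)) * |g t| := by
    intro t ht
    have h0 : (0:ℝ) < t := lt_of_lt_of_le one_pos ht
    rw [hh, Real.norm_eq_abs, abs_mul, abs_mul, abs_of_pos (inv_pos.2 h0),
      abs_of_pos (Real.exp_pos _)]
  have wle : ∀ t : ℝ, 1 ≤ t → t⁻¹ * Real.exp (-(s*t)) ≤ 1 := by
    intro t ht
    have h0 : (0:ℝ) < t := lt_of_lt_of_le one_pos ht
    calc t⁻¹ * Real.exp (-(s*t)) ≤ 1 * 1 := by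
          refine mul_le_mul (inv_le_one_of_one_le₀ ht) (Real.exp_le_one_iff.2 ?_)
            (Real.exp_pos _).le one_pos.le
          nlinarith
      _ = 1 := one_mul 1
  have hi1 : IntegrableOn h (Set.Ioc 1 A) := by
    refine hgI.mono' (hh_meas.restrict) ?_
    filter_upwards [ae_restrict_mem measurableSet_Ioc] with t ht
    rw [key t ht.1.le]
    calc t⁻¹ * Real.exp (-(s*t)) * |g t| ≤ 1 * |g t| :=
          mul_le_mul_of_nonneg_right (wle t ht.1.le) (abs_nonneg _)
      _ = |g t| := one_mul _
  have hwA : IntegrableOn (fun t => t⁻¹ * Real.exp (-(s*t))) (Set.Ioi A) :=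
    weight_integrable hs hA
  have hi2 : IntegrableOn h (Set.Ioi A) := by
    refine (hwA.const_mul c).mono' (hh_meas.restrict) ?_
    filter_upwards [ae_restrict_mem measurableSet_Ioi] with t ht
    have ht1 : (1:ℝ) ≤ t := hA.trans ht.le
    rw [key t ht1]
    have h0 : (0:ℝ) < t := lt_of_lt_of_le one_pos ht1
    calc t⁻¹ * Real.exp (-(s*t)) * |g t| ≤ t⁻¹ * Real.exp (-(s*t)) * c := by
          refine mul_le_mul_of_nonneg_left (hb t ht) (by positivity)
      _ = c * (t⁻¹ * Real.exp (-(s*t))) := by ring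
  have hsplit : Set.Ioc (1:ℝ) A ∪ Set.Ioi A = Set.Ioi (1:ℝ) := Set.Ioc_union_Ioi_eq_Ioi hA
  have hint : IntegrableOn h (Set.Ioi 1) := by
    rw [← hsplit]; exact hi1.union hi2
  refine ⟨hint, ?_⟩
  have heq : ∫ t in Set.Ioi (1:ℝ), h t
      = (∫ t in Set.Ioc (1:ℝ) A, h t) + ∫ t in Set.Ioi A, h t := by
    rw [← hsplit, setIntegral_union (Set.Ioc_disjoint_Ioi le_rfl) measurableSet_Ioi hi1 hi2]
  have b1 : ‖∫ t in Set.Ioc (1:ℝ) A, h t‖ ≤ ∫ t in Set.Ioc (1:ℝ) A, |g t| := by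
    refine norm_integral_le_of_norm_le hgI ?_
    filter_upwards [ae_restrict_mem measurableSet_Ioc] with t ht
    rw [key t ht.1.le]
    calc t⁻¹ * Real.exp (-(s*t)) * |g t| ≤ 1 * |g t| :=
          mul_le_mul_of_nonneg_right (wle t ht.1.le) (abs_nonneg _)
      _ = |g t| := one_mul _
  have b2 : ‖∫ t in Set.Ioi A, h t‖ ≤ c * ∫ t in Set.Ioi (1:ℝ), t⁻¹ * Real.exp (-(s*t)) := by
    have step1 : ‖∫ t in Set.Ioi A, h t‖ ≤ ∫ t in Set.Ioi A, c * (t⁻¹ * Real.exp (-(s*t))) := by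
      refine norm_integral_le_of_norm_le (hwA.const_mul c) ?_
      filter_upwards [ae_restrict_mem measurableSet_Ioi] with t ht
      have ht1 : (1:ℝ) ≤ t := hA.trans ht.le
      have h0 : (0:ℝ) < t := lt_of_lt_of_le one_pos ht1
      rw [key t ht1]
      calc t⁻¹ * Real.exp (-(s*t)) * |g t| ≤ t⁻¹ * Real.exp (-(s*t)) * c :=
            mul_le_mul_of_nonneg_left (hb t ht) (by positivity)
        _ = c * (t⁻¹ * Real.exp (-(s*t))) := by ring
    have step2 : ∫ t in Set.Ioi A, t⁻¹ * Real.exp (-(s*t))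
        ≤ ∫ t in Set.Ioi (1:ℝ), t⁻¹ * Real.exp (-(s*t)) := by
      refine setIntegral_mono_set (weight_integrable hs le_rfl) ?_
        (HasSubset.Subset.eventuallyLE (Set.Ioi_subset_Ioi hA))
      filter_upwards [ae_restrict_mem measurableSet_Ioi] with t ht
      have h0 : (0:ℝ) < t := lt_trans one_pos ht
      positivity
    calc ‖∫ t in Set.Ioi A, h t‖ ≤ ∫ t in Set.Ioi A, c * (t⁻¹ * Real.exp (-(s*t))) := step1
      _ = c * ∫ t in Set.Ioi A, t⁻¹ * Real.exp (-(s*t)) := MeasureTheory.integral_const_mul c _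
      _ ≤ c * ∫ t in Set.Ioi (1:ℝ), t⁻¹ * Real.exp (-(s*t)) :=
            mul_le_mul_of_nonneg_left step2 hc
  calc ‖∫ t in Set.Ioi (1:ℝ), h t‖
      ≤ ‖∫ t in Set.Ioc (1:ℝ) A, h t‖ + ‖∫ t in Set.Ioi A, h t‖ := by
        rw [heq]; exact norm_add_le _ _
    _ ≤ (∫ t in Set.Ioc (1:ℝ) A, |g t|) + c * ∫ t in Set.Ioi (1:ℝ), t⁻¹ * Real.exp (-(s*t)) :=
        add_le_add b1 b2

/-- final-value-type theorem. If `f : ℝ → ℝ` is locally integrable and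
`f(t) → ℓ` as `t → ∞`, then `(−1/ln s) ∫_1^∞ t⁻¹ e^{−st} f(t) dt → ℓ` as `s ↓ 0`. -/
theorem statement5 (f : ℝ → ℝ) (hf : LocallyIntegrable f (volume : Measure ℝ)) (ℓ : ℝ)
    (hlim : Tendsto f atTop (nhds ℓ)) :
    Tendsto
      (fun s : ℝ => (-1 / Real.log s) * ∫ t in Set.Ioi (1 : ℝ), t⁻¹ * Real.exp (-(s * t)) * f t)
      (nhdsWithin 0 (Set.Ioi 0)) (nhds ℓ) := by

  rw [Metric.tendsto_nhdsWithin_nhds]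
  intro ε hε
  have h1 : ∀ᶠ t in atTop, |f t - ℓ| ≤ ε/2 := by
    filter_upwards [hlim.eventually (Metric.ball_mem_nhds ℓ (half_pos hε))] with t ht
    rw [Real.dist_eq] at ht
    exact ht.le
  obtain ⟨A₀, hA₀⟩ := eventually_atTop.1 h1
  set A := max A₀ 1 with hAdef
  have hA : 1 ≤ A := le_max_right _ _
  have hbA : ∀ t, A < t → |f t - ℓ| ≤ ε/2 :=
    fun t ht => hA₀ t ((le_max_left _ _).trans ht.le)
  set M := ∫ t in Set.Ioc (1:ℝ) A, |f t - ℓ| with hMdef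
  have hM : 0 ≤ M := integral_nonneg (fun _ => abs_nonneg _)
  set C := M + ε/2 + |ℓ| with hCdef
  have hC : 0 < C := by have := abs_nonneg ℓ; simp only [hCdef]; linarith
  set K := max 1 ((2*C + ε)/ε) with hKdef
  refine ⟨Real.exp (-K), Real.exp_pos _, ?_⟩
  intro s hsIoi hd
  have hs : 0 < s := hsIoi
  rw [Real.dist_eq, sub_zero, abs_of_pos hs] at hd
  have hK1 : (1:ℝ) ≤ K := le_max_left _ _
  have hs1 : s < 1 :=
    lt_of_lt_of_le hd (Real.exp_le_one_iff.2 (by linarith))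
  have hlogs : Real.log s < -K := by
    have := Real.log_lt_log hs hd
    rwa [Real.log_exp] at this
  set L := -Real.log s with hLdef
  have hL : K < L := by simp only [hLdef]; linarith
  have hL0 : (0:ℝ) < L := lt_of_lt_of_le (lt_of_lt_of_le one_pos hK1) hL.le
  obtain ⟨hint, hbnd⟩ := gpart_bound f hf ℓ hs hA (by positivity) hbA
  set I := ∫ t in Set.Ioi (1:ℝ), t⁻¹ * Real.exp (-(s*t)) with hIdef
  have hIub : I ≤ L + 1 := weight_upper hs hs1
  have hIlb : L - 1 ≤ I := weight_lower hs hs1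
  set J := ∫ t in Set.Ioi (1:ℝ), t⁻¹ * Real.exp (-(s*t)) * (f t - ℓ) with hJdef
  have hmain : ∫ t in Set.Ioi (1:ℝ), t⁻¹ * Real.exp (-(s*t)) * f t = J + ℓ * I := by
    have hcong : ∀ t : ℝ,
        t⁻¹ * Real.exp (-(s*t)) * f t
          = t⁻¹ * Real.exp (-(s*t)) * (f t - ℓ) + ℓ * (t⁻¹ * Real.exp (-(s*t))) := by
      intro t; ring
    rw [show (fun t : ℝ => t⁻¹ * Real.exp (-(s*t)) * f t)
        = fun t : ℝ => t⁻¹ * Real.exp (-(s*t)) * (f t - ℓ) + ℓ * (t⁻¹ * Real.exp (-(s*t)))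
        from funext hcong,
      MeasureTheory.integral_add hint ((weight_integrable hs le_rfl).const_mul ℓ),
      MeasureTheory.integral_const_mul]
  clear_value A M C K L I J
  have hrw : -1 / Real.log s = L⁻¹ := by
    rw [hLdef, neg_div, one_div, inv_neg]
  rw [Real.dist_eq, hmain, hrw]
  have hLne : L ≠ 0 := ne_of_gt hL0
  have hfact : L⁻¹ * (J + ℓ * I) - ℓ = L⁻¹ * (J + ℓ * (I - L)) := by
    field_simp; ring
  rw [hfact, abs_mul, abs_of_pos (inv_pos.2 hL0)]
  have hIL : |I - L| ≤ 1 := abs_le.2 ⟨by linarith, by linarith⟩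
  have habs : |J + ℓ * (I - L)| ≤ M + ε/2 * I + |ℓ| := by
    calc |J + ℓ * (I - L)| ≤ |J| + |ℓ * (I - L)| := abs_add_le _ _
      _ = |J| + |ℓ| * |I - L| := by rw [abs_mul]
      _ ≤ (M + ε/2 * I) + |ℓ| * 1 := by
          refine add_le_add ?_ (mul_le_mul_of_nonneg_left hIL (abs_nonneg _))
          simpa [hMdef, hIdef, Real.norm_eq_abs] using hbnd
      _ = M + ε/2 * I + |ℓ| := by ring
  have hI0 : 0 ≤ I := by linarith [hIlb, hL0, hK1, hL]
  have hX : M + ε/2 * I + |ℓ| < ε * L := by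
    have hKC : (2*C + ε)/ε ≤ K := by rw [hKdef]; exact le_max_right _ _
    have : 2*C + ε ≤ K * ε := (div_le_iff₀ hε).1 hKC
    have hIL' : ε/2 * I ≤ ε/2 * (L+1) := mul_le_mul_of_nonneg_left hIub (by positivity)
    have hεK : ε * K < ε * L := mul_lt_mul_of_pos_left hL hε
    have h3 : ε/2*(L+1) = (ε*L)/2 + ε/2 := by ring
    have h4 : K*ε = ε*K := mul_comm _ _
    linarith
  calc L⁻¹ * |J + ℓ * (I - L)| ≤ L⁻¹ * (M + ε/2 * I + |ℓ|) :=
        mul_le_mul_of_nonneg_left habs (inv_pos.2 hL0).le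
    _ < L⁻¹ * (ε * L) := by
        exact mul_lt_mul_of_pos_left hX (inv_pos.2 hL0)
    _ = ε := by field_simp
end

section
/- For every integer n ≥ 2, with the cyclic convention u_{n+1} := u_1, one has ∫_{(0,∞)^n} du · |u|₁ e^{−|u|₁} / ∏_{j=1}^n (u_j + u_{j+1}) = (n/2) · ∫_{(0,∞)^n} du · e^{−|u|₁} / ∏_{j=1}^{n−1} (u_j + u_{j+1}). -/
open MeasureTheory

namespace S7
variable {n : ℕ} [NeZero n]

/-- positive orthant -/
def S (n : ℕ) : Set (Fin n → ℝ) := Set.univ.pi fun _ : Fin n => Set.Ioi (0 : ℝ)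

lemma measurableSet_S : MeasurableSet (S n) :=
  MeasurableSet.univ_pi fun _ => measurableSet_Ioi

/-- integrand with factor `k` removed from the cyclic product -/
noncomputable def H (k : Fin n) (u : Fin n → ℝ) : ℝ :=
  Real.exp (-∑ j, u j) / ∏ j ∈ Finset.univ.erase k, (u j + u (j + 1))

lemma measurable_H (k : Fin n) : Measurable (H k) := by
  unfold H
  apply Measurable.div
  · exact (Finset.measurable_sum _ fun j _ => measurable_pi_apply j).neg.exp
  · exact Finset.measurable_prod _ fun j _ =>
      (measurable_pi_apply j).add (measurable_pi_apply (j + 1))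

end S7

namespace S7
set_option linter.unusedSectionVars false
variable {n : ℕ} [NeZero n]

lemma sum_shift (u : Fin n → ℝ) (m : Fin n) : (∑ j, u (j - m)) = ∑ j, u j :=
  Fintype.sum_equiv (Equiv.subRight m) _ _ fun _ => rfl

lemma sum_succ (u : Fin n → ℝ) : (∑ j : Fin n, u (j + 1)) = ∑ j, u j :=
  Fintype.sum_equiv (Equiv.addRight 1) _ _ fun _ => rfl

/-- pointwise decomposition on the orthant -/
lemma pointwise_decomp (u : Fin n → ℝ) (hu : ∀ j, 0 < u j) :
    (∑ j, u j) * Real.exp (-∑ j, u j) / ∏ j, (u j + u (j + 1)) =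
      ∑ k, (1 / 2) * H k u := by
  have hP : ∀ k : Fin n, (0:ℝ) < u k + u (k + 1) := fun k => add_pos (hu k) (hu (k + 1))
  have hPpos : (0:ℝ) < ∏ j, (u j + u (j + 1)) := Finset.prod_pos fun j _ => hP j
  have hHk : ∀ k : Fin n, H k u =
      (u k + u (k + 1)) * Real.exp (-∑ j, u j) / ∏ j, (u j + u (j + 1)) := by
    intro k
    rw [H, eq_div_iff hPpos.ne']
    rw [← Finset.mul_prod_erase Finset.univ _ (Finset.mem_univ k)]
    have hp2 : (0:ℝ) < ∏ j ∈ Finset.univ.erase k, (u j + u (j + 1)) :=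
      Finset.prod_pos fun j _ => hP j
    field_simp
  simp only [hHk]
  rw [Finset.sum_congr rfl (fun k _ => by ring :
      ∀ k ∈ Finset.univ, (1/2:ℝ) * ((u k + u (k + 1)) * Real.exp (-∑ j, u j) /
        ∏ j, (u j + u (j + 1))) =
      (u k + u (k + 1)) * ((1/2) * Real.exp (-∑ j, u j) / ∏ j, (u j + u (j + 1)))),
    ← Finset.sum_mul, Finset.sum_add_distrib, sum_succ u]
  ring

end S7

namespace S7
variable {n : ℕ} [NeZero n]

def lastF (n : ℕ) [NeZero n] : Fin n :=
  ⟨n - 1, Nat.sub_lt (Nat.pos_of_ne_zero (NeZero.ne n)) one_pos⟩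

/-- rotation of coordinates -/
def rot (m : Fin n) : (Fin n → ℝ) ≃ᵐ (Fin n → ℝ) :=
  MeasurableEquiv.arrowCongr' (Equiv.addRight m) (MeasurableEquiv.refl ℝ)

lemma rot_apply (m : Fin n) (u : Fin n → ℝ) (b : Fin n) : rot m u b = u (b - m) := by
  simp [rot, MeasurableEquiv.arrowCongr', Equiv.arrowCongr', sub_eq_add_neg]

lemma rot_measurePreserving (m : Fin n) :
    MeasurePreserving (rot m) volume volume :=
  volume_preserving_arrowCongr' _ _ (MeasurePreserving.id _)

lemma rot_preimage (m : Fin n) : rot m ⁻¹' (S n) = S n := by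
  ext u
  simp only [S, Set.mem_preimage, Set.mem_univ_pi, Set.mem_Ioi, rot_apply]
  constructor
  · intro h a; simpa using h (a + m)
  · intro h b; exact h (b - m)

lemma H_rot (k m : Fin n) (u : Fin n → ℝ) : H k (rot m u) = H (k - m) u := by
  unfold H
  simp only [rot_apply]
  rw [sum_shift u m]
  congr 1
  refine Finset.prod_equiv (Equiv.subRight m) (fun j => ?_) (fun j _ => ?_)
  · simp [Finset.mem_erase, sub_left_inj]
  · simp only [Equiv.subRight_apply]
    congr 2
    abel

lemma lint_H (k : Fin n) :
    ∫⁻ u in S n, ENNReal.ofReal (H k u) =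
      ∫⁻ u in S n, ENNReal.ofReal (H (lastF n) u) := by
  have h1 : ∀ u : Fin n → ℝ, H (lastF n) (rot (lastF n - k) u) = H k u := by
    intro u; rw [H_rot, sub_sub_cancel]
  calc ∫⁻ u in S n, ENNReal.ofReal (H k u)
      = ∫⁻ u in rot (lastF n - k) ⁻¹' S n,
          ENNReal.ofReal (H (lastF n) (rot (lastF n - k) u)) := by
        rw [rot_preimage]; simp only [h1]
    _ = ∫⁻ u in S n, ENNReal.ofReal (H (lastF n) u) :=
        (rot_measurePreserving _).setLIntegral_comp_preimage measurableSet_S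
          (ENNReal.measurable_ofReal.comp (measurable_H _))

end S7

open S7
/-- For every `n ≥ 2`, with the cyclic convention `u_{n+1} := u_1`,
`∫_{(0,∞)ⁿ} du |u|₁ e^{−|u|₁} / ∏_{j=1}^n (u_j + u_{j+1})
  = (n/2) ∫_{(0,∞)ⁿ} du e^{−|u|₁} / ∏_{j=1}^{n−1} (u_j + u_{j+1})`. -/
theorem statement7 (n : ℕ) [NeZero n] (hn : 2 ≤ n) :
    (∫ u in Set.univ.pi fun _ : Fin n => Set.Ioi (0 : ℝ),
        (∑ j, u j) * Real.exp (-∑ j, u j) / ∏ j, (u j + u (j + 1))) =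
      ((n : ℝ) / 2) *
        ∫ u in Set.univ.pi fun _ : Fin n => Set.Ioi (0 : ℝ),
          Real.exp (-∑ j, u j) /
            ∏ j ∈ Finset.univ.filter (fun j : Fin n => (j : ℕ) + 1 < n), (u j + u (j + 1)) := by
  classical
  have hS : MeasurableSet (S n) := measurableSet_S
  set F : (Fin n → ℝ) → ℝ :=
    fun u => (∑ j, u j) * Real.exp (-∑ j, u j) / ∏ j, (u j + u (j + 1)) with hF
  have hFm : Measurable F := by
    apply Measurable.div
    · exact ((Finset.measurable_sum _ fun j _ => measurable_pi_apply j).mul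
        ((Finset.measurable_sum _ fun j _ => measurable_pi_apply j).neg.exp))
    · exact Finset.measurable_prod _ fun j _ =>
        (measurable_pi_apply j).add (measurable_pi_apply (j + 1))
  have hfil : Finset.univ.filter (fun j : Fin n => (j : ℕ) + 1 < n) =
      Finset.univ.erase (lastF n) := by
    ext j
    simp only [Finset.mem_filter, Finset.mem_univ, true_and, Finset.mem_erase, and_true,
      Fin.ne_iff_vne, lastF]
    have := j.isLt
    omega
  -- the RHS integrand is `H (lastF n)`
  have hG : (fun u : Fin n → ℝ => Real.exp (-∑ j, u j) /
      ∏ j ∈ Finset.univ.filter (fun j : Fin n => (j : ℕ) + 1 < n), (u j + u (j + 1)))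
      = H (lastF n) := by
    funext u; rw [hfil]; rfl
  rw [hG]
  -- positivity on the orthant
  have hmem : ∀ {u : Fin n → ℝ}, u ∈ S n → ∀ j, 0 < u j := by
    intro u hu j; exact hu j (Set.mem_univ j)
  have hF0 : ∀ u ∈ S n, 0 ≤ F u := by
    intro u hu
    have h := hmem hu
    exact div_nonneg (mul_nonneg (Finset.sum_nonneg fun j _ => (h j).le) (Real.exp_pos _).le)
      (Finset.prod_nonneg fun j _ => (add_pos (h j) (h (j + 1))).le)
  have hH0 : ∀ (k : Fin n), ∀ u ∈ S n, 0 ≤ H k u := by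
    intro k u hu
    have h := hmem hu
    exact div_nonneg (Real.exp_pos _).le
      (Finset.prod_nonneg fun j _ => (add_pos (h j) (h (j + 1))).le)
  have hHmE : ∀ k : Fin n, Measurable fun u => ENNReal.ofReal ((1 / 2 : ℝ) * H k u) :=
    fun k => ENNReal.measurable_ofReal.comp (measurable_const.mul (measurable_H k))
  set L : ENNReal := ∫⁻ u in S n, ENNReal.ofReal (H (lastF n) u) with hL
  -- key lintegral identity
  have key : (∫⁻ u in S n, ENNReal.ofReal (F u)) = ENNReal.ofReal ((n : ℝ) / 2) * L := by
    have step1 : (∫⁻ u in S n, ENNReal.ofReal (F u)) =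
        ∫⁻ u in S n, ∑ k, ENNReal.ofReal ((1 / 2 : ℝ) * H k u) := by
      refine setLIntegral_congr_fun hS (fun u hu => ?_)
      have h := hmem hu
      rw [hF]
      simp only []
      rw [pointwise_decomp u h]
      exact ENNReal.ofReal_sum_of_nonneg fun k _ =>
        mul_nonneg (by norm_num) (hH0 k u hu)
    rw [step1, lintegral_finset_sum _ fun k _ => hHmE k]
    have step2 : ∀ k : Fin n, (∫⁻ u in S n, ENNReal.ofReal ((1 / 2 : ℝ) * H k u)) =
        ENNReal.ofReal (1 / 2 : ℝ) * L := by
      intro k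
      have : ∀ u, ENNReal.ofReal ((1 / 2 : ℝ) * H k u) =
          ENNReal.ofReal (1 / 2 : ℝ) * ENNReal.ofReal (H k u) :=
        fun u => ENNReal.ofReal_mul (by norm_num)
      simp only [this]
      rw [lintegral_const_mul _ (measurable_H k).ennreal_ofReal, lint_H k]
    simp only [step2, Finset.sum_const, Finset.card_univ, Fintype.card_fin, nsmul_eq_mul]
    rw [← mul_assoc]
    congr 1
    rw [show ((n : ℝ) / 2) = (n : ℝ) * (1 / 2) by ring,
      ENNReal.ofReal_mul (Nat.cast_nonneg n), ENNReal.ofReal_natCast]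
  -- convert both Bochner integrals to lower integrals
  have hFi : (∫ u in S n, F u) = (∫⁻ u in S n, ENNReal.ofReal (F u)).toReal := by
    rw [integral_eq_lintegral_of_nonneg_ae
      ((ae_restrict_iff' hS).2 (ae_of_all _ hF0))
      hFm.aestronglyMeasurable]
  have hGi : (∫ u in S n, H (lastF n) u) = L.toReal := by
    rw [hL, integral_eq_lintegral_of_nonneg_ae
      ((ae_restrict_iff' hS).2 (ae_of_all _ (hH0 (lastF n))))
      (measurable_H (lastF n)).aestronglyMeasurable]
  show (∫ u in S n, F u) = ((n : ℝ) / 2) * ∫ u in S n, H (lastF n) u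
  rw [hFi, hGi, key, ENNReal.toReal_mul, ENNReal.toReal_ofReal (by positivity)]
end

section
/- Let d ≥ 1 be an integer and let V : ℝ^d → [0,∞) be a bounded measurable function with compact support such that the set {x ∈ ℝ^d : V(x) ≠ 0} has positive Lebesgue measure. Then the family of functions { x ↦ √V(x) · e^{i ξ·x} : ξ ∈ ℝ^d }, regarded as elements of L²(ℝ^d), is linearly independent: for every finite nonempty set M ⊆ ℝ^d and nonzero coefficients c_ξ ∈ ℂ (ξ ∈ M), the function x ↦ √V(x) Σ_{ξ∈M} c_ξ e^{iξ·x} is not the zero element of L²(ℝ^d). -/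
open MeasureTheory

/-- The character `t ↦ e^{irt}` as a monoid hom from `Multiplicative ℝ` to `ℂ`. -/
noncomputable def expChar (r : ℝ) : Multiplicative ℝ →* ℂ where
  toFun t := Complex.exp (Complex.I * (r * (Multiplicative.toAdd t : ℝ)))
  map_one' := by simp
  map_mul' t u := by
    simp only [toAdd_mul]
    push_cast
    rw [← Complex.exp_add]
    ring_nf

lemma expChar_injective : Function.Injective expChar := by
  intro r r' h
  by_contra hne
  have hδ : r - r' ≠ 0 := sub_ne_zero.mpr hne
  set t : ℝ := Real.pi / (r - r') with ht
  have h1 : Complex.exp (Complex.I * (r * t)) = Complex.exp (Complex.I * (r' * t)) := by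
    have := congrArg (fun χ : Multiplicative ℝ →* ℂ => χ (Multiplicative.ofAdd t)) h
    simpa [expChar] using this
  rw [Complex.exp_eq_exp_iff_exists_int] at h1
  obtain ⟨n, hn⟩ := h1
  have h2 : ((r - r') * t : ℂ) = (n : ℂ) * (2 * Real.pi) := by
    have := sub_eq_iff_eq_add.mpr hn
    have h3 : Complex.I * ((r - r') * t : ℂ) = Complex.I * ((n : ℂ) * (2 * Real.pi)) := by
      push_cast at this ⊢
      linear_combination this
    exact mul_left_cancel₀ Complex.I_ne_zero h3
  have h4 : (r - r') * t = (n : ℝ) * (2 * Real.pi) := by exact_mod_cast h2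
  rw [ht, mul_div_cancel₀ _ hδ] at h4
  have hpi := Real.pi_ne_zero
  have h5 : ((n : ℝ) * 2 - 1) * Real.pi = 0 := by linear_combination -h4
  rcases mul_eq_zero.mp h5 with h6 | h6
  · have : (n : ℝ) * 2 = 1 := by linarith
    have : n * 2 = 1 := by exact_mod_cast this
    omega
  · exact hpi h6

/-- A nontrivial exponential polynomial on `ℝ` has null zero set. -/
lemma expPoly_zeroSet_null {ι : Type*} (s : Finset ι) (hs : s.Nonempty) (a : ι → ℝ)
    (ha : Set.InjOn a s) (b : ι → ℂ) (hb : ∀ j ∈ s, b j ≠ 0) :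
    volume {t : ℝ | ∑ j ∈ s, b j * Complex.exp (Complex.I * ((a j : ℂ) * (t : ℂ))) = 0} = 0 := by
  classical
  by_contra hpos
  set g : ℝ → ℂ := fun t => ∑ j ∈ s, b j * Complex.exp (Complex.I * ((a j : ℂ) * (t : ℂ)))
    with hgdef
  set Z : Set ℝ := {t : ℝ | g t = 0} with hZdef
  -- `g` is analytic on `ℝ`
  have hg_an : AnalyticOnNhd ℝ g Set.univ := by
    intro t _
    apply Finset.analyticAt_fun_sum
    intro j _
    refine analyticAt_const.mul ?_
    refine (analyticAt_cexp.restrictScalars).comp ?_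
    refine analyticAt_const.mul (analyticAt_const.mul ?_)
    exact Complex.ofRealCLM.analyticAt t
  -- an accumulation point of the zero set
  have hpos2 : (volume : Measure ℝ) Z ≠ 0 := hpos
  have hex : ∃ t₀ ∈ Z, ∀ u ∈ nhdsWithin t₀ Z, 0 < volume u :=
    exists_mem_forall_mem_nhdsWithin_pos_measure hpos2
  obtain ⟨t₀, ht₀Z, ht₀⟩ := hex
  have hfreq : ∃ᶠ t in nhdsWithin t₀ {t₀}ᶜ, g t = 0 := by
    rw [Filter.frequently_iff]
    intro U hU
    rw [mem_nhdsWithin] at hU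
    obtain ⟨W, hWopen, hWmem, hWU⟩ := hU
    have hmem : W ∩ Z ∈ nhdsWithin t₀ Z :=
      Filter.inter_mem (mem_nhdsWithin_of_mem_nhds (hWopen.mem_nhds hWmem)) self_mem_nhdsWithin
    have hpos' : 0 < volume (W ∩ Z) := ht₀ _ hmem
    have hnsub : ¬ (W ∩ Z ⊆ {t₀}) := by
      intro hsub
      have : (volume : Measure ℝ) (W ∩ Z) ≤ volume {t₀} := measure_mono hsub
      rw [Real.volume_singleton] at this
      exact absurd (le_antisymm this (zero_le)) (ne_of_gt hpos')
    obtain ⟨t, htWZ, htne⟩ := Set.not_subset.mp hnsub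
    exact ⟨t, hWU ⟨htWZ.1, htne⟩, htWZ.2⟩
  have hgzero : Set.EqOn g 0 Set.univ :=
    hg_an.eqOn_zero_of_preconnected_of_frequently_eq_zero isPreconnected_univ
      (Set.mem_univ t₀) hfreq
  -- Dedekind linear independence of characters
  have li := (linearIndependent_monoidHom (Multiplicative ℝ) ℂ).comp expChar expChar_injective
  rw [linearIndependent_iff'] at li
  set B : ℝ → ℂ := fun r => ∑ j ∈ s.filter (fun j => a j = r), b j with hBdef
  have hsum : ∑ r ∈ s.image a, B r • (((fun f : Multiplicative ℝ →* ℂ => (f : Multiplicative ℝ → ℂ)) ∘ expChar) r) = 0 := by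
    funext u
    simp only [Finset.sum_apply, Pi.smul_apply, smul_eq_mul, Pi.zero_apply, Function.comp_apply]
    have hstep : ∀ r ∈ s.image a, B r * expChar r u =
        ∑ j ∈ s.filter (fun j => a j = r), b j * Complex.exp (Complex.I * ((a j : ℂ) * ((Multiplicative.toAdd u : ℝ) : ℂ))) := by
      intro r hr
      rw [hBdef, Finset.sum_mul]
      refine Finset.sum_congr rfl ?_
      intro j hj
      rcases Finset.mem_filter.mp hj with ⟨_, hjr⟩
      simp [expChar, hjr, mul_assoc]
    rw [Finset.sum_congr rfl hstep,
      Finset.sum_fiberwise_of_maps_to (fun j hj => Finset.mem_image_of_mem a hj)]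
    exact hgzero (Set.mem_univ (Multiplicative.toAdd u))
  obtain ⟨j₀, hj₀⟩ := hs
  have hB := li (s.image a) B hsum (a j₀) (Finset.mem_image_of_mem a hj₀)
  have hfil : s.filter (fun j => a j = a j₀) = {j₀} := by
    ext j
    simp only [Finset.mem_filter, Finset.mem_singleton]
    constructor
    · rintro ⟨hjs, hja⟩
      exact ha hjs hj₀ hja
    · rintro rfl
      exact ⟨hj₀, rfl⟩
  rw [hBdef] at hB
  simp only [hfil, Finset.sum_singleton] at hB
  exact hb j₀ hj₀ hB

set_option maxHeartbeats 1000000 in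
/-- Let `V : ℝᵈ → [0,∞)` be bounded, measurable, compactly supported, with
`{V ≠ 0}` of positive Lebesgue measure. Then the family `x ↦ √V(x) e^{iξ·x}` (`ξ ∈ ℝᵈ`) is
linearly independent in `L²`: for every finite nonempty `M ⊆ ℝᵈ` and nonzero coefficients
`c_ξ`, the function `x ↦ √V(x) ∑_{ξ∈M} c_ξ e^{iξ·x}` is not the zero element of `L²`,
i.e. it is not a.e. equal to `0`. -/
theorem statement13 (d : ℕ) (hd : 1 ≤ d) (V : (Fin d → ℝ) → ℝ)
    (hVmeas : Measurable V) (hVbdd : ∃ C : ℝ, ∀ x, V x ≤ C) (hVnonneg : ∀ x, 0 ≤ V x)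
    (hVsupp : HasCompactSupport V)
    (hVpos : 0 < volume {x : Fin d → ℝ | V x ≠ 0})
    (M : Finset (Fin d → ℝ)) (hM : M.Nonempty)
    (c : (Fin d → ℝ) → ℂ) (hc : ∀ ξ ∈ M, c ξ ≠ 0) :
    ¬ ((fun x : Fin d → ℝ =>
          (Real.sqrt (V x) : ℂ) *
            ∑ ξ ∈ M, c ξ * Complex.exp (Complex.I * ((∑ k, ξ k * x k : ℝ) : ℂ)))
        =ᵐ[volume] 0) := by
  classical
  intro h
  set f : (Fin d → ℝ) → ℂ :=
    fun x => ∑ ξ ∈ M, c ξ * Complex.exp (Complex.I * ((∑ k, ξ k * x k : ℝ) : ℂ)) with hfdef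
  have hfc : Continuous f := by fun_prop
  -- the zero set of `f` has positive measure
  have hnull : volume {x | ¬ ((Real.sqrt (V x) : ℂ) * f x = 0)} = 0 := by
    have := h
    rw [Filter.EventuallyEq, MeasureTheory.ae_iff] at this
    simpa only [Pi.zero_apply] using this
  have hsub : {x : Fin d → ℝ | V x ≠ 0} ⊆
      {x | f x = 0} ∪ {x | ¬ ((Real.sqrt (V x) : ℂ) * f x = 0)} := by
    intro x hx
    by_cases hfx : f x = 0
    · exact Or.inl hfx
    · refine Or.inr ?_
      have hV : 0 < V x := lt_of_le_of_ne (hVnonneg x) (Ne.symm hx)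
      have hsq : Real.sqrt (V x) ≠ 0 := ne_of_gt (Real.sqrt_pos.mpr hV)
      exact mul_ne_zero (by exact_mod_cast hsq) hfx
  set Z : Set (Fin d → ℝ) := {x | f x = 0} with hZdef
  have hZpos : 0 < volume Z := by
    by_contra hcon
    push_neg at hcon
    have hZ0 : volume Z = 0 := le_antisymm hcon (zero_le)
    have : volume {x : Fin d → ℝ | V x ≠ 0} = 0 :=
      measure_mono_null hsub (measure_union_null hZ0 hnull)
    rw [this] at hVpos
    exact lt_irrefl _ hVpos
  -- choose a generic direction `v`
  obtain ⟨v, hv⟩ : ∃ v : Fin d → ℝ, ∀ ξ ∈ M, ∀ η ∈ M, ξ ≠ η →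
      (∑ k, ξ k * v k) ≠ (∑ k, η k * v k) := by
    by_contra hcon
    push_neg at hcon
    have hker : ∀ ξ ∈ M, ∀ η ∈ M, ξ ≠ η →
        volume {v : Fin d → ℝ | ∑ k, ξ k * v k = ∑ k, η k * v k} = 0 := by
      intro ξ hξ η hη hne
      set L : (Fin d → ℝ) →ₗ[ℝ] ℝ := ∑ k, (ξ k - η k) • LinearMap.proj k with hLdef
      have hLapp : ∀ w, L w = ∑ k, (ξ k - η k) * w k := by
        intro w
        simp [hLdef, LinearMap.sum_apply, LinearMap.smul_apply, smul_eq_mul]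
      have hseteq : {v : Fin d → ℝ | ∑ k, ξ k * v k = ∑ k, η k * v k}
          = (LinearMap.ker L : Set (Fin d → ℝ)) := by
        ext w
        simp only [Set.mem_setOf_eq, SetLike.mem_coe, LinearMap.mem_ker, hLapp]
        constructor
        · intro hw
          simp only [sub_mul, Finset.sum_sub_distrib]
          rw [hw]; ring
        · intro hw
          have : (∑ k, ξ k * w k) - (∑ k, η k * w k) = 0 := by
            rw [← Finset.sum_sub_distrib]
            simpa [sub_mul] using hw
          linarith [this]
      rw [hseteq]
      apply Measure.addHaar_submodule
      -- the kernel is a proper submodule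
      intro htop
      obtain ⟨k₀, hk₀⟩ : ∃ k₀, ξ k₀ - η k₀ ≠ 0 := by
        by_contra hall
        push_neg at hall
        apply hne
        funext k
        have := hall k
        linarith [this]
      have hmem : Pi.single k₀ (1 : ℝ) ∈ LinearMap.ker L := by
        rw [htop]; trivial
      rw [LinearMap.mem_ker] at hmem
      rw [hLapp] at hmem
      rw [Finset.sum_eq_single k₀] at hmem
      · simp at hmem
        exact hk₀ hmem
      · intro k _ hk
        simp [Pi.single_eq_of_ne hk]
      · intro hk
        exact absurd (Finset.mem_univ k₀) hk
    have huniv : (Set.univ : Set (Fin d → ℝ)) ⊆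
        ⋃ ξ ∈ (M : Set (Fin d → ℝ)), ⋃ η ∈ (M : Set (Fin d → ℝ)), {v : Fin d → ℝ | ξ ≠ η ∧ ∑ k, ξ k * v k = ∑ k, η k * v k} := by
      intro w _
      obtain ⟨ξ, hξ, η, hη, hne, heq⟩ := hcon w
      exact Set.mem_biUnion hξ (Set.mem_biUnion hη ⟨hne, heq⟩)
    have hzero : volume (⋃ ξ ∈ (M : Set (Fin d → ℝ)), ⋃ η ∈ (M : Set (Fin d → ℝ)),
        {v : Fin d → ℝ | ξ ≠ η ∧ ∑ k, ξ k * v k = ∑ k, η k * v k}) = 0 := by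
      rw [measure_biUnion_null_iff (μ := (volume : Measure (Fin d → ℝ))) M.countable_toSet]
      intro ξ hξ
      rw [measure_biUnion_null_iff (μ := (volume : Measure (Fin d → ℝ))) M.countable_toSet]
      intro η hη
      by_cases hne : ξ = η
      · subst hne
        simp
      · refine measure_mono_null ?_ (hker ξ hξ η hη hne)
        intro w hw
        exact hw.2
    have : volume (Set.univ : Set (Fin d → ℝ)) = 0 :=
      measure_mono_null huniv hzero
    have hop : 0 < volume (Set.univ : Set (Fin d → ℝ)) :=
      isOpen_univ.measure_pos volume Set.univ_nonempty
    rw [this] at hop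
    exact lt_irrefl _ hop
  -- Fubini: find a line on which `f` vanishes on a set of positive measure
  obtain ⟨x₀, hx₀⟩ : ∃ x₀ : Fin d → ℝ, volume {t : ℝ | f (x₀ + t • v) = 0} ≠ 0 := by
    by_contra hcon
    push_neg at hcon
    set A : Set ((Fin d → ℝ) × ℝ) := {p | f (p.1 + p.2 • v) = 0} with hAdef
    have hAc : Continuous fun p : (Fin d → ℝ) × ℝ => f (p.1 + p.2 • v) := by fun_prop
    have hAm : MeasurableSet A := hAc.measurable (measurableSet_singleton 0)
    have h1 : (volume.prod volume) A = 0 := by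
      rw [Measure.prod_apply hAm]
      have : ∀ x : Fin d → ℝ, volume (Prod.mk x ⁻¹' A) = 0 := fun x => hcon x
      rw [lintegral_congr this, lintegral_zero]
    have h2 : (volume.prod volume) A ≠ 0 := by
      rw [Measure.prod_apply_symm hAm]
      have hslice : ∀ t : ℝ, volume ((fun x : Fin d → ℝ => (x, t)) ⁻¹' A) = volume Z := by
        intro t
        have heq : ((fun x : Fin d → ℝ => (x, t)) ⁻¹' A) = (fun x => x + t • v) ⁻¹' Z := rfl
        rw [heq, measure_preimage_add_right]
      rw [lintegral_congr hslice, lintegral_const]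
      have h3 : volume (Set.univ : Set ℝ) = ⊤ := by
        simp [Real.volume_univ]
      rw [h3]
      exact mul_ne_zero (ne_of_gt hZpos) ENNReal.top_ne_zero
    exact h2 h1
  -- restrict to the line and apply the 1-dimensional lemma
  apply hx₀
  have hfun : ∀ t : ℝ, f (x₀ + t • v) =
      ∑ ξ ∈ M, (c ξ * Complex.exp (Complex.I * ((∑ k, ξ k * x₀ k : ℝ) : ℂ))) *
        Complex.exp (Complex.I * (((∑ k, ξ k * v k : ℝ) : ℂ) * (t : ℂ))) := by
    intro t
    rw [hfdef]
    refine Finset.sum_congr rfl ?_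
    intro ξ _
    have hsum : (∑ k, ξ k * (x₀ + t • v) k) = (∑ k, ξ k * x₀ k) + (∑ k, ξ k * v k) * t := by
      simp only [Pi.add_apply, Pi.smul_apply, smul_eq_mul, mul_add, Finset.sum_add_distrib,
        Finset.sum_mul]
      congr 1
      refine Finset.sum_congr rfl fun k _ => ?_
      ring
    rw [hsum]
    push_cast
    rw [mul_add, Complex.exp_add]
    ring
  have hseteq : {t : ℝ | f (x₀ + t • v) = 0} =
      {t : ℝ | ∑ ξ ∈ M, (c ξ * Complex.exp (Complex.I * ((∑ k, ξ k * x₀ k : ℝ) : ℂ))) *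
        Complex.exp (Complex.I * (((∑ k, ξ k * v k : ℝ) : ℂ) * (t : ℂ))) = 0} := by
    ext t
    simp only [Set.mem_setOf_eq, hfun t]
  rw [hseteq]
  refine expPoly_zeroSet_null M hM (fun ξ => ∑ k, ξ k * v k) ?_
    (fun ξ => c ξ * Complex.exp (Complex.I * ((∑ k, ξ k * x₀ k : ℝ) : ℂ))) ?_
  · intro ξ hξ η hη hne
    by_contra hne2
    exact hv ξ hξ η hη hne2 hne
  · intro ξ hξ
    exact mul_ne_zero (hc ξ hξ) (Complex.exp_ne_zero _)
end

section
/- Let d ≥ 1 be an integer, g : ℝ^d → ℂ a continuous function, and E > 0. Then lim_{ε↓0} (1/(2ε)) ∫_{{k ∈ ℝ^d : E−ε < |k|² < E+ε}} g(k) dk = (E^{d/2−1} / 2) · ∫_{S^{d−1}} g(√E · ξ) dS(ξ), where dk is Lebesgue measure on ℝ^d, |k| the Euclidean norm, and dS the surface measure on the unit sphere S^{d−1}. -/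
open MeasureTheory Set Metric Filter

noncomputable section
namespace Statement16Aux

variable {d : ℕ}

local notation "V" => EuclideanSpace ℝ (Fin d)

lemma cont_sphere_integral (g : EuclideanSpace ℝ (Fin d) → ℂ) (hg : Continuous g) :
    Continuous fun r : ℝ => ∫ ξ : sphere (0 : EuclideanSpace ℝ (Fin d)) 1,
      g (r • (ξ : EuclideanSpace ℝ (Fin d))) ∂(volume : Measure (EuclideanSpace ℝ (Fin d))).toSphere := by
  rw [continuous_iff_continuousAt]
  intro r₀
  obtain ⟨M, hM⟩ : ∃ M, ∀ x ∈ closedBall (0 : EuclideanSpace ℝ (Fin d)) (|r₀| + 1), ‖g x‖ ≤ M :=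
    (isCompact_closedBall _ _).exists_bound_of_continuousOn hg.continuousOn
  refine continuousAt_of_dominated ?_ ?_ (integrable_const M) ?_
  · exact Eventually.of_forall fun r =>
      (show Continuous fun ξ : sphere (0 : EuclideanSpace ℝ (Fin d)) 1 =>
        g (r • (ξ : EuclideanSpace ℝ (Fin d))) from
        hg.comp (by fun_prop)).aestronglyMeasurable
  · filter_upwards [Metric.ball_mem_nhds r₀ one_pos] with r hr
    refine Eventually.of_forall fun ξ => hM _ ?_
    have hξ : ‖(ξ : EuclideanSpace ℝ (Fin d))‖ = 1 := mem_sphere_zero_iff_norm.1 ξ.2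
    rw [mem_closedBall_zero_iff, norm_smul, hξ, mul_one, Real.norm_eq_abs]
    have : |r - r₀| < 1 := by simpa [Real.dist_eq] using hr
    calc |r| = |r₀ + (r - r₀)| := by ring_nf
    _ ≤ |r₀| + |r - r₀| := abs_add_le _ _
    _ ≤ |r₀| + 1 := by linarith
  · exact Eventually.of_forall fun ξ =>
      (hg.comp (continuous_id.smul continuous_const)).continuousAt


lemma shell_polar (hd : 1 ≤ d) (g : V → ℂ) (hg : Continuous g)
    {a b : ℝ} (ha : 0 < a) :
    ∫ k in {k : V | a < ‖k‖ ∧ ‖k‖ < b}, g k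
      = ∫ r in Ioo a b, (r ^ (d - 1) : ℝ) •
          ∫ ξ : sphere (0 : V) 1, g (r • (ξ : V))
            ∂(volume : Measure V).toSphere := by
  haveI : Nontrivial V :=
    Module.nontrivial_of_finrank_pos (R := ℝ)
      (by rw [finrank_euclideanSpace_fin]; omega)
  have hdim : Module.finrank ℝ V = d := finrank_euclideanSpace_fin
  set μ : Measure V := volume with hμ
  set S : Set V := {k | a < ‖k‖ ∧ ‖k‖ < b} with hSdef
  have hSnorm : S = (fun k : V => ‖k‖) ⁻¹' Ioo a b := rfl
  have hSm : MeasurableSet S := (isOpen_Ioo.preimage continuous_norm).measurableSet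
  set G : sphere (0 : V) 1 × Ioi (0 : ℝ) → ℂ :=
    fun p => (Ioo a b).indicator (fun r => g (r • (p.1 : V))) p.2 with hGdef
  have key : ∀ x : ({0}ᶜ : Set V), G (homeomorphUnitSphereProd V x) = S.indicator g x.1 := by
    intro x
    have hx0 : (x : V) ≠ 0 := x.2
    have hnx : ‖(x : V)‖ ≠ 0 := norm_ne_zero_iff.2 hx0
    by_cases hx : ‖(x : V)‖ ∈ Ioo a b
    · have hxS : (x : V) ∈ S := hx
      simp only [hGdef, homeomorphUnitSphereProd, homeomorphSphereProd,
        Homeomorph.homeomorph_mk_coe]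
      simp only [Equiv.coe_fn_mk, one_smul, div_one, indicator_of_mem hx, indicator_of_mem hxS,
        smul_inv_smul₀ hnx]
    · have hxS : (x : V) ∉ S := hx
      simp only [hGdef, homeomorphUnitSphereProd, homeomorphSphereProd,
        Homeomorph.homeomorph_mk_coe]
      simp only [Equiv.coe_fn_mk, one_smul, div_one, indicator_of_notMem hx, indicator_of_notMem hxS]
  have hIntOn : IntegrableOn g S μ := by
    refine IntegrableOn.mono_set ?_ (fun k hk => mem_closedBall_zero_iff.2 hk.2.le)
    exact ContinuousOn.integrableOn_compact (isCompact_closedBall (0 : V) b)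
      (hg.continuousOn : ContinuousOn g (closedBall (0 : V) b))
  have hInd : Integrable (S.indicator g) μ := hIntOn.integrable_indicator hSm
  have hmp := μ.measurePreserving_homeomorphUnitSphereProd
  rw [hdim] at hmp
  have hemb := (homeomorphUnitSphereProd V).measurableEmbedding
  have hGcomp : (G ∘ (homeomorphUnitSphereProd V)) = fun x : ({0}ᶜ : Set V) =>
      S.indicator g x.1 := funext key
  have hsub : Integrable (fun x : ({0}ᶜ : Set V) => S.indicator g x.1)
      (μ.comap Subtype.val) := by
    have h0 : MeasurableSet ({0}ᶜ : Set V) := (measurableSet_singleton 0).compl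
    have h1 : Integrable (S.indicator g ∘ (Subtype.val : ({0}ᶜ : Set V) → V))
        (μ.comap Subtype.val) := by
      rw [← (MeasurableEmbedding.subtype_coe h0).integrable_map_iff,
        (MeasurableEmbedding.subtype_coe h0).map_comap, Subtype.range_coe]
      exact hInd.restrict
    exact h1
  have hGint : Integrable G (μ.toSphere.prod (Measure.volumeIoiPow (d - 1))) := by
    rw [← hmp.integrable_comp_emb hemb, hGcomp]
    exact hsub
  calc
    ∫ k in S, g k ∂μ = ∫ k, S.indicator g k ∂μ := (integral_indicator hSm).symm
    _ = ∫ k in ({0}ᶜ : Set V), S.indicator g k ∂μ := by rw [restrict_compl_singleton]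
    _ = ∫ x : ({0}ᶜ : Set V), S.indicator g x.1 ∂(μ.comap Subtype.val) :=
      (integral_subtype_comap (measurableSet_singleton 0).compl _).symm
    _ = ∫ x : ({0}ᶜ : Set V), G (homeomorphUnitSphereProd V x) ∂(μ.comap Subtype.val) :=
      integral_congr_ae (Eventually.of_forall fun x => (key x).symm)
    _ = ∫ p, G p ∂(μ.toSphere.prod (Measure.volumeIoiPow (d - 1))) :=
      hmp.integral_comp hemb G
    _ = ∫ r : Ioi (0 : ℝ), (∫ ξ, G (ξ, r) ∂μ.toSphere) ∂(Measure.volumeIoiPow (d - 1)) :=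
      integral_prod_symm G hGint
    _ = ∫ r : Ioi (0 : ℝ),
          (Ioo a b).indicator (fun t => ∫ ξ : sphere (0 : V) 1, g (t • (ξ : V)) ∂μ.toSphere)
            (r : ℝ) ∂(Measure.volumeIoiPow (d - 1)) := by
      refine integral_congr_ae (Eventually.of_forall fun r => ?_)
      by_cases hr : (r : ℝ) ∈ Ioo a b
      · simp [hGdef, indicator_of_mem hr]
      · simp [hGdef, indicator_of_notMem hr]
    _ = ∫ r in Ioi (0 : ℝ), (r ^ (d - 1) : ℝ) •
          (Ioo a b).indicator (fun t => ∫ ξ : sphere (0 : V) 1, g (t • (ξ : V)) ∂μ.toSphere)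
            r ∂volume := by
      simp only [Measure.volumeIoiPow, ENNReal.ofReal]
      rw [integral_withDensity_eq_integral_smul
          (by exact (measurable_subtype_coe.pow_const _).real_toNNReal),
        integral_subtype_comap measurableSet_Ioi
          (fun t : ℝ => Real.toNNReal (t ^ (d - 1)) •
            (Ioo a b).indicator
              (fun s => ∫ ξ : sphere (0 : V) 1, g (s • (ξ : V)) ∂μ.toSphere) t)]
      refine setIntegral_congr_fun measurableSet_Ioi fun x hx => ?_
      rw [NNReal.smul_def, Real.coe_toNNReal _ (pow_nonneg hx.out.le _)]
    _ = ∫ r in Ioi (0 : ℝ),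
          (Ioo a b).indicator
            (fun t => (t ^ (d - 1) : ℝ) • ∫ ξ : sphere (0 : V) 1, g (t • (ξ : V)) ∂μ.toSphere)
            r ∂volume := by
      refine setIntegral_congr_fun measurableSet_Ioi fun r _ => ?_
      by_cases hr : r ∈ Ioo a b
      · simp [indicator_of_mem hr]
      · simp [indicator_of_notMem hr]
    _ = ∫ r in Ioi (0 : ℝ) ∩ Ioo a b,
          (r ^ (d - 1) : ℝ) • ∫ ξ : sphere (0 : V) 1, g (r • (ξ : V)) ∂μ.toSphere ∂volume := by
      rw [setIntegral_indicator measurableSet_Ioo]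
    _ = ∫ r in Ioo a b,
          (r ^ (d - 1) : ℝ) • ∫ ξ : sphere (0 : V) 1, g (r • (ξ : V)) ∂μ.toSphere ∂volume := by
      have hss : Ioi (0 : ℝ) ∩ Ioo a b = Ioo a b :=
        inter_eq_right.2 (fun r hr => lt_trans ha hr.1)
      rw [hss]


end Statement16Aux
end

open MeasureTheory Set Metric Filter Statement16Aux

/-- For continuous `g : ℝᵈ → ℂ` and `E > 0`,
`(1/(2ε)) ∫_{E−ε<|k|²<E+ε} g(k) dk → (E^{d/2−1}/2) ∫_{S^{d−1}} g(√E ξ) dS(ξ)` as `ε ↓ 0`,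
where `dS` is the surface measure on the unit sphere (realized as `volume.toSphere`). -/
theorem statement16 (d : ℕ) (hd : 1 ≤ d) (g : EuclideanSpace ℝ (Fin d) → ℂ)
    (hg : Continuous g) (E : ℝ) (hE : 0 < E) :
    Filter.Tendsto
      (fun ε : ℝ => (1 / (2 * ε)) •
        ∫ k in {k : EuclideanSpace ℝ (Fin d) | E - ε < ‖k‖ ^ 2 ∧ ‖k‖ ^ 2 < E + ε}, g k)
      (nhdsWithin 0 (Set.Ioi 0))
      (nhds ((E ^ ((d : ℝ) / 2 - 1) / 2) •
        ∫ ξ : Metric.sphere (0 : EuclideanSpace ℝ (Fin d)) 1,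
          g (Real.sqrt E • (ξ : EuclideanSpace ℝ (Fin d)))
          ∂((volume : Measure (EuclideanSpace ℝ (Fin d))).toSphere))) := by
  set c := Real.sqrt E with hc
  have hc0 : 0 < c := Real.sqrt_pos.2 hE
  set I : ℂ := ∫ ξ : sphere (0 : EuclideanSpace ℝ (Fin d)) 1,
      g (c • (ξ : EuclideanSpace ℝ (Fin d)))
      ∂(volume : Measure (EuclideanSpace ℝ (Fin d))).toSphere with hI
  set h : ℝ → ℂ := fun r => (r ^ (d - 1) : ℝ) •
      ∫ ξ : sphere (0 : EuclideanSpace ℝ (Fin d)) 1, g (r • (ξ : EuclideanSpace ℝ (Fin d)))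
      ∂(volume : Measure (EuclideanSpace ℝ (Fin d))).toSphere with hhdef
  have hcont : Continuous h :=
    (continuous_pow (d - 1)).smul (cont_sphere_integral g hg)
  set u : ℝ → ℝ := fun ε => Real.sqrt (E - ε) with hudef
  set v : ℝ → ℝ := fun ε => Real.sqrt (E + ε) with hvdef
  have hu : Tendsto u (nhdsWithin 0 (Set.Ioi 0)) (nhds c) := by
    have h1 : Continuous fun ε : ℝ => Real.sqrt (E - ε) :=
      Real.continuous_sqrt.comp (continuous_const.sub continuous_id)
    exact (h1.tendsto' 0 c (by simp [hc])).mono_left nhdsWithin_le_nhds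
  have hv : Tendsto v (nhdsWithin 0 (Set.Ioi 0)) (nhds c) := by
    have h1 : Continuous fun ε : ℝ => Real.sqrt (E + ε) :=
      Real.continuous_sqrt.comp (continuous_const.add continuous_id)
    exact (h1.tendsto' 0 c (by simp [hc])).mono_left nhdsWithin_le_nhds
  have hEmem : Ioo (0 : ℝ) E ∈ nhdsWithin (0 : ℝ) (Set.Ioi 0) :=
    Ioo_mem_nhdsGT_of_mem ⟨le_refl 0, hE⟩
  have huv : ∀ ε ∈ Ioo (0 : ℝ) E, u ε < v ε := fun ε hε =>
    Real.sqrt_lt_sqrt (by linarith [hε.2]) (by linarith [hε.1])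
  have hu0 : ∀ ε ∈ Ioo (0 : ℝ) E, 0 < u ε := fun ε hε =>
    Real.sqrt_pos.2 (by linarith [hε.2])
  have hu2 : ∀ ε ∈ Ioo (0 : ℝ) E, (u ε) ^ 2 = E - ε := fun ε hε =>
    Real.sq_sqrt (by linarith [hε.2])
  have hv2 : ∀ ε ∈ Ioo (0 : ℝ) E, (v ε) ^ 2 = E + ε := fun ε hε =>
    Real.sq_sqrt (by linarith [hε.1])
  -- shell integral as interval integral
  have hshell : ∀ ε ∈ Ioo (0 : ℝ) E,
      (∫ k in {k : EuclideanSpace ℝ (Fin d) | E - ε < ‖k‖ ^ 2 ∧ ‖k‖ ^ 2 < E + ε}, g k)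
        = ∫ r in u ε..v ε, h r := by
    intro ε hε
    have hset : {k : EuclideanSpace ℝ (Fin d) | E - ε < ‖k‖ ^ 2 ∧ ‖k‖ ^ 2 < E + ε}
        = {k : EuclideanSpace ℝ (Fin d) | u ε < ‖k‖ ∧ ‖k‖ < v ε} := by
      ext k
      simp only [mem_setOf_eq]
      constructor
      · rintro ⟨h1, h2⟩
        have hk2 : 0 < ‖k‖ ^ 2 := by linarith [hε.2]
        have hk0 : 0 < ‖k‖ := by
          rcases (norm_nonneg k).lt_or_eq with h | h
          · exact h
          · exfalso; rw [← h] at hk2; simp at hk2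
        exact ⟨(Real.sqrt_lt' hk0).2 h1, (Real.lt_sqrt (norm_nonneg k)).2 h2⟩
      · rintro ⟨h1, h2⟩
        have hk0 : 0 < ‖k‖ := lt_of_le_of_lt (Real.sqrt_nonneg _) h1
        exact ⟨(Real.sqrt_lt' hk0).1 h1, (Real.lt_sqrt (norm_nonneg k)).1 h2⟩
    rw [hset, shell_polar hd g hg (hu0 ε hε),
      intervalIntegral.integral_of_le (le_of_lt (huv ε hε)), integral_Ioc_eq_integral_Ioo]
  -- FTC-type little-o
  have hfm : StronglyMeasurableAtFilter h (nhds c) (volume : Measure ℝ) :=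
    ⟨univ, univ_mem, hcont.aestronglyMeasurable.restrict⟩
  have hlim : Tendsto h (nhds c ⊓ ae (volume : Measure ℝ)) (nhds (h c)) :=
    (hcont.tendsto c).mono_left inf_le_left
  have hlO := intervalIntegral.measure_integral_sub_linear_isLittleO_of_tendsto_ae
      (μ := (volume : Measure ℝ)) hfm hlim hu hv
  simp only [intervalIntegral.integral_const, smul_eq_mul, mul_one] at hlO
  have hA : Tendsto (fun ε => (v ε - u ε)⁻¹ • ∫ x in u ε..v ε, h x)
      (nhdsWithin 0 (Set.Ioi 0)) (nhds (h c)) := by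
    have h0 := hlO.tendsto_inv_smul_nhds_zero
    have h1 := h0.add (tendsto_const_nhds (x := h c)
      (f := nhdsWithin (0:ℝ) (Set.Ioi 0)))
    rw [zero_add] at h1
    refine Tendsto.congr' ?_ h1
    filter_upwards [hEmem] with ε hε
    have hne : v ε - u ε ≠ 0 := sub_ne_zero.2 (huv ε hε).ne'
    rw [smul_sub, inv_smul_smul₀ hne, sub_add_cancel]
  have hquot : Tendsto (fun ε => (v ε - u ε) / (2 * ε)) (nhdsWithin 0 (Set.Ioi 0))
      (nhds ((2 * c)⁻¹)) := by
    have hsum : Tendsto (fun ε => u ε + v ε) (nhdsWithin 0 (Set.Ioi 0)) (nhds (c + c)) :=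
      hu.add hv
    have hinv : Tendsto (fun ε => (u ε + v ε)⁻¹) (nhdsWithin 0 (Set.Ioi 0))
        (nhds ((c + c)⁻¹)) := hsum.inv₀ (ne_of_gt (by linarith : (0:ℝ) < c + c))
    have hcc : (c + c)⁻¹ = (2 * c)⁻¹ := by ring_nf
    rw [hcc] at hinv
    refine Tendsto.congr' ?_ hinv
    filter_upwards [hEmem] with ε hε
    have hkey : (v ε - u ε) * (u ε + v ε) = 2 * ε := by
      have h1 := hu2 ε hε
      have h2 := hv2 ε hε
      nlinarith [h1, h2]
    have hup : 0 < u ε + v ε := by linarith [hu0 ε hε, huv ε hε]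
    have hε0 : (0:ℝ) < ε := hε.1
    rw [eq_comm, div_eq_iff (ne_of_gt (by linarith : (0:ℝ) < 2 * ε)), inv_mul_eq_div,
      eq_div_iff (ne_of_gt hup)]
    exact hkey
  have hmain : Tendsto
      (fun ε => ((v ε - u ε) / (2 * ε)) • ((v ε - u ε)⁻¹ • ∫ x in u ε..v ε, h x))
      (nhdsWithin 0 (Set.Ioi 0)) (nhds ((2 * c)⁻¹ • h c)) := hquot.smul hA
  have hL : (2 * c)⁻¹ • h c = (E ^ ((d : ℝ) / 2 - 1) / 2) • I := by
    rw [hhdef]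
    simp only [← hI]
    rw [smul_smul]
    congr 1
    have h1 : c ^ (d - 1 : ℕ) = E ^ (((d : ℝ) - 1) / 2) := by
      rw [hc, Real.sqrt_eq_rpow, ← Real.rpow_natCast (E ^ ((1:ℝ)/2)) (d - 1),
        ← Real.rpow_mul hE.le]
      congr 1
      have hcast : ((d - 1 : ℕ) : ℝ) = (d : ℝ) - 1 := by
        rw [Nat.cast_sub hd]; simp
      rw [hcast]; ring
    have h2 : (2 * c)⁻¹ = E ^ (-(1/2) : ℝ) / 2 := by
      rw [hc, Real.sqrt_eq_rpow, mul_inv, ← Real.rpow_neg hE.le]; ring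
    rw [h1, h2]
    rw [div_mul_eq_mul_div, ← Real.rpow_add hE]
    have : (-(1/2) : ℝ) + ((d : ℝ) - 1) / 2 = (d : ℝ) / 2 - 1 := by ring
    rw [this]
  rw [← hL]
  refine Tendsto.congr' ?_ hmain
  filter_upwards [hEmem] with ε hε
  have hne : v ε - u ε ≠ 0 := sub_ne_zero.2 (huv ε hε).ne'
  have hε0 : ε ≠ 0 := ne_of_gt hε.1
  rw [smul_smul, hshell ε hε]
  congr 1
  field_simp
end
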